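/- arXiv:1908.07019 — 5 statements merged into one kernel-verified Lean document; each statement's English description precedes it below -/
import Mathlib

section
/- Let A be a p-adically complete Z_p-algebra. An S_A-module is projective if and only if it is projective as an A[[u]]-module, via the natural ring map A[[u]] → S_A induced by A → W(k') ⊗_{Z_p} A and u ↦ u. -/
set_option linter.unusedSectionVars false
set_option maxHeartbeats 1000000


open scoped TensorProduct
open PowerSeries

noncomputable section

variable (p : ℕ) [Fact p.Prime]
variable (k' : Type) [Field k'] [Fintype k'] [CharP k' p]

/-- The canonical ring homomorphism `ℤ_p →+* W(k')`, via `ℤ_p ≃ W(𝔽_p)`. -/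
noncomputable def zpToWitt : ℤ_[p] →+* WittVector p k' :=
  (WittVector.map (ZMod.castHom (dvd_refl p) k')).comp (WittVector.equiv p).symm.toRingHom

noncomputable instance : Algebra ℤ_[p] (WittVector p k') :=
  (zpToWitt p k').toAlgebra

/-- The coefficient ring `W(k') ⊗_{ℤ_p} R`. -/
abbrev WW (R : Type) [CommRing R] [Algebra ℤ_[p] R] : Type :=
  WittVector p k' ⊗[ℤ_[p]] R

/-- `𝔖_R := (W(k') ⊗_{ℤ_p} R)⟦u⟧`. -/
abbrev SS (R : Type) [CommRing R] [Algebra ℤ_[p] R] : Type :=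
  PowerSeries (WW p k' R)

/-- `σ` is the Frobenius of `W(k') ⊗_{ℤ_p} R` (the Witt vector Frobenius on `W(k')` and the
identity on `R`), and `φ` is the Frobenius endomorphism of `𝔖_R` (acting as `σ` on
coefficients and sending `u` to `u^p`). -/
def IsFrobeniusLift (R : Type) [CommRing R] [Algebra ℤ_[p] R]
    (σ : WW p k' R →+* WW p k' R) (φ : SS p k' R →+* SS p k' R) : Prop :=
  (∀ w : WittVector p k',
      σ (w ⊗ₜ[ℤ_[p]] (1 : R)) = (WittVector.frobenius w) ⊗ₜ[ℤ_[p]] (1 : R)) ∧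
    (∀ x : R, σ ((1 : WittVector p k') ⊗ₜ[ℤ_[p]] x) = (1 : WittVector p k') ⊗ₜ[ℤ_[p]] x) ∧
    ∀ (g : SS p k' R) (n : ℕ),
      PowerSeries.coeff (R := WW p k' R) n (φ g) =
        if p ∣ n then σ (PowerSeries.coeff (R := WW p k' R) (n / p) g) else 0

/-- An Eisenstein polynomial of degree `e'` over `W(k')`: monic of degree `e' ≥ 1`, all
non-leading coefficients in `p·W(k')`, constant coefficient not in `p²·W(k')`. -/
def IsEisenstein (e' : ℕ) (E : Polynomial (WittVector p k')) : Prop :=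
  E.Monic ∧ E.natDegree = e' ∧ 1 ≤ e' ∧
    (∀ i < e', E.coeff i ∈ Ideal.span {(p : WittVector p k')}) ∧
    E.coeff 0 ∉ Ideal.span {(p : WittVector p k')} ^ 2

/-- The image in `𝔖_R` of a polynomial over `W(k')`. -/
noncomputable def polyToSS (R : Type) [CommRing R] [Algebra ℤ_[p] R]
    (E : Polynomial (WittVector p k')) : SS p k' R :=
  PowerSeries.mk fun n => (E.coeff n) ⊗ₜ[ℤ_[p]] (1 : R)

/-- The ring homomorphism `R →+* 𝔖_R`, `x ↦ 1 ⊗ x` (a constant power series). -/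
noncomputable def AtoSS (R : Type) [CommRing R] [Algebra ℤ_[p] R] : R →+* SS p k' R :=
  (PowerSeries.C (R := WW p k' R)).comp
    (Algebra.TensorProduct.includeRight :
        R →ₐ[ℤ_[p]] WittVector p k' ⊗[ℤ_[p]] R).toRingHom

/-- `(P, ι)` is the base change `φ*M` of `M` along `φ`, characterised by its universal
property among `φ`-semilinear maps out of `M`. -/
def IsFrobeniusBaseChange {S : Type} [CommRing S] (φ : S →+* S) {M P : Type}
    [AddCommGroup M] [Module S M] [AddCommGroup P] [Module S P] (ι : M →ₛₗ[φ] P) : Prop :=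
  ∀ (Q : Type) (_ : AddCommGroup Q) (_ : Module S Q) (g : M →ₛₗ[φ] Q),
    ∃! h : P →ₗ[S] Q, ∀ m : M, h (ι m) = g m

/-- The linearization `1 ⊗ Φ : φ*M → M` of the `φ`-semilinear endomorphism `Φ` of `M`
becomes an isomorphism after inverting `E` (i.e. after localizing at the powers of `E`). -/
def LinearizationBijectiveAfterInverting {S : Type} [CommRing S] (φ : S →+* S) (E : S)
    {M : Type} [AddCommGroup M] [Module S M] (Φ : M →ₛₗ[φ] M) : Prop :=
  ∃ (P : Type) (_ : AddCommGroup P) (_ : Module S P) (ι : M →ₛₗ[φ] P)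
      (Φlin : P →ₗ[S] M),
    IsFrobeniusBaseChange φ ι ∧ (∀ m : M, Φlin (ι m) = Φ m) ∧
      Function.Bijective ⇑(LocalizedModule.map (Submonoid.powers E) Φlin)

variable (A : Type) [CommRing A] [Algebra ℤ_[p] A]

/-- The natural ring map `A⟦u⟧ → 𝔖_A` induced by `A → W(k') ⊗_{ℤ_p} A`, `a ↦ 1 ⊗ a`, and
`u ↦ u`. -/
noncomputable def AuToSS : PowerSeries A →+* SS p k' A :=
  PowerSeries.map
    (Algebra.TensorProduct.includeRight :
        A →ₐ[ℤ_[p]] WittVector p k' ⊗[ℤ_[p]] A).toRingHom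

noncomputable def resW : WittVector p k' →+* k' := WittVector.ghostComponent 0

lemma resW_apply (x : WittVector p k') : resW p k' x = x.coeff 0 := by
  simp [resW, WittVector.ghostComponent_apply, wittPolynomial_zero]

lemma mem_span_p_iff (x : WittVector p k') :
    x ∈ Ideal.span {(p : WittVector p k')} ↔ x.coeff 0 = 0 := by
  rw [Ideal.mem_span_singleton]
  constructor
  · rintro ⟨y, rfl⟩
    rw [mul_comm]
    exact WittVector.mul_charP_coeff_zero y
  · intro h
    have hx : x = WittVector.verschiebung (x.shift 1) := by
      have := WittVector.eq_iterate_verschiebung (x := x) (n := 1) ?_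
      · simpa using this
      · intro i hi
        interval_cases i
        exact h
    obtain ⟨z, hz⟩ := (WittVector.frobenius_bijective p k').surjective (x.shift 1)
    refine ⟨z, ?_⟩
    rw [hx, ← hz, WittVector.verschiebung_frobenius, mul_comm]

lemma coeff_eq_zero_of_pow_dvd (n : ℕ) (x : WittVector p k')
    (h : (p : WittVector p k') ^ n ∣ x) : ∀ i < n, x.coeff i = 0 := by
  induction n generalizing x with
  | zero => intro i hi; omega
  | succ n ih =>
    obtain ⟨y, rfl⟩ := h
    intro i hi
    have : (p : WittVector p k') ^ (n + 1) * y = (p : WittVector p k') ^ n * y * p := by ring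
    rw [this]
    rcases i with _ | i
    · exact WittVector.mul_charP_coeff_zero _
    · rw [WittVector.mul_charP_coeff_succ]
      have := ih ((p : WittVector p k') ^ n * y) ⟨y, rfl⟩ i (by omega)
      rw [this, zero_pow (Fact.out : p.Prime).ne_zero]

lemma eq_zero_of_forall_pow_dvd (x : WittVector p k')
    (h : ∀ n, (p : WittVector p k') ^ n ∣ x) : x = 0 := by
  ext i
  simpa using coeff_eq_zero_of_pow_dvd p k' (i + 1) x (h (i + 1)) i (by omega)

lemma ringHom_padic_eq (f : ℤ_[p] →+* k') (c : ℤ_[p]) :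
    f c = ZMod.castHom (dvd_refl p) k' (PadicInt.toZMod c) := by
  have h1 := PadicInt.toZMod_spec c
  rw [PadicInt.maximalIdeal_eq_span_p, Ideal.mem_span_singleton] at h1
  obtain ⟨t, ht⟩ := h1
  have hc : c = (ZMod.cast (PadicInt.toZMod c) : ℤ_[p]) + (p : ℤ_[p]) * t := by
    rw [← ht]; ring
  conv_lhs => rw [hc]
  rw [map_add, map_mul]
  have hfp : f (p : ℤ_[p]) = 0 := by
    rw [map_natCast, CharP.cast_eq_zero]
  rw [hfp, zero_mul, add_zero, ZMod.cast_eq_val, map_natCast, ZMod.castHom_apply,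
    ZMod.cast_eq_val]

----------------------------------------------------------------
-- Step C/D : a `ℤ_[p]`-basis of `W(k')`

noncomputable def zmodAlg : Algebra (ZMod p) k' := ZMod.algebra k' p
attribute [local instance] zmodAlg

lemma zmod_smul (a : ZMod p) (x : k') : a • x = ZMod.castHom (dvd_refl p) k' a * x := rfl

noncomputable def kBasis : Module.Basis (Fin (Module.finrank (ZMod p) k')) (ZMod p) k' :=
  Module.finBasis _ _

noncomputable def wLift (i : Fin (Module.finrank (ZMod p) k')) : WittVector p k' :=
  WittVector.teichmuller p (kBasis p k' i)

lemma zp_smul (c : ℤ_[p]) (x : WittVector p k') : c • x = zpToWitt p k' c * x := rfl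

lemma resW_zp (c : ℤ_[p]) :
    resW p k' (zpToWitt p k' c) =
      ZMod.castHom (dvd_refl p) k' (PadicInt.toZMod c) :=
  ringHom_padic_eq p k' ((resW p k').comp (zpToWitt p k')) c

lemma resW_sum (c : Fin (Module.finrank (ZMod p) k') → ℤ_[p]) :
    resW p k' (∑ i, c i • wLift p k' i) = ∑ i, (PadicInt.toZMod (c i)) • kBasis p k' i := by
  rw [map_sum]
  refine Finset.sum_congr rfl fun i _ => ?_
  rw [zp_smul, map_mul, resW_zp, zmod_smul]
  congr 1
  rw [resW_apply, wLift, WittVector.teichmuller_coeff_zero]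


section GenericApprox

variable {R M ι : Type} [CommRing R] [AddCommGroup M] [Module R M] [Fintype ι]

lemma aux_span (P : R) (w : ι → M)
    (hcomp : IsPrecomplete (Ideal.span {P}) R)
    (hsep : ∀ m : M, (∀ n : ℕ, ∃ y, m = P ^ n • y) → m = 0)
    (hstep : ∀ x : M, ∃ (γ : ι → R) (y : M), x = (∑ i, γ i • w i) + P • y)
    (x : M) : ∃ c : ι → R, x = ∑ i, c i • w i := by
  classical
  choose γf yf hstep using hstep
  let X : ℕ → M := fun n => n.rec x fun _ w => yf w
  have hX : ∀ n, X (n + 1) = yf (X n) := fun n => rfl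
  let f : ℕ → ι → R := fun n i => ∑ j ∈ Finset.range n, P ^ j * γf (X j) i
  have hmain : ∀ n, x = (∑ i, f n i • w i) + (P ^ n) • X n := by
    intro n
    induction n with
    | zero => simp [f, X]
    | succ n ih =>
      have hfsucc : ∀ i, f (n + 1) i = f n i + P ^ n * γf (X n) i := by
        intro i; simp [f, Finset.sum_range_succ]
      rw [ih, hstep (X n), ← hX n, smul_add, Finset.smul_sum, ← add_assoc,
        ← Finset.sum_add_distrib]
      congr 1
      · refine Finset.sum_congr rfl fun i _ => ?_
        rw [hfsucc, add_smul, mul_smul]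
      · rw [← mul_smul, ← pow_succ]
  have hf : ∀ i, ∀ {m n : ℕ}, m ≤ n →
      f m i ≡ f n i [SMOD (Ideal.span {P} ^ m • ⊤ : Submodule R R)] := by
    intro i m n hmn
    rw [SModEq.sub_mem, Ideal.smul_eq_mul, Ideal.mul_top]
    have hsub : f n i - f m i = ∑ j ∈ Finset.Ico m n, P ^ j * γf (X j) i := by
      rw [Finset.sum_Ico_eq_sub _ hmn]
    rw [← neg_sub, hsub]
    refine neg_mem (Submodule.sum_mem _ fun j hj => ?_)
    rw [Ideal.span_singleton_pow, Ideal.mem_span_singleton]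
    exact Dvd.dvd.mul_right (pow_dvd_pow _ (Finset.mem_Ico.mp hj).1) _
  have hprec := fun i => hcomp.prec (f := fun n => f n i) (fun {m n} h => hf i h)
  choose c hc using hprec
  refine ⟨c, ?_⟩
  have key : ∀ n : ℕ, ∃ y, x - ∑ i, c i • w i = P ^ n • y := by
    intro n
    have hdvd : ∀ i, ∃ t, c i - f n i = P ^ n * t := by
      intro i
      have := (hc i n).symm
      rw [SModEq.sub_mem, Ideal.smul_eq_mul, Ideal.mul_top, Ideal.span_singleton_pow,
        Ideal.mem_span_singleton] at this
      obtain ⟨t, ht⟩ := this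
      exact ⟨t, ht⟩
    choose t ht using hdvd
    refine ⟨X n - ∑ i, t i • w i, ?_⟩
    have hcf : ∀ i, c i • w i = f n i • w i + (P ^ n * t i) • w i := by
      intro i
      rw [← add_smul, ← ht i]
      ring_nf
    calc x - ∑ i, c i • w i
        = (∑ i, f n i • w i) + P ^ n • X n - ∑ i, (f n i • w i + (P ^ n * t i) • w i) := by
          rw [← hmain n]
          congr 1
          exact Finset.sum_congr rfl fun i _ => hcf i
      _ = P ^ n • X n - ∑ i, (P ^ n * t i) • w i := by
          rw [Finset.sum_add_distrib]
          abel
      _ = P ^ n • (X n - ∑ i, t i • w i) := by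
          rw [smul_sub, Finset.smul_sum]
          simp_rw [mul_smul]
  have := hsep _ key
  rw [sub_eq_zero] at this
  exact this

lemma aux_indep (P : R) (w : ι → M)
    (hsepR : ∀ c : R, (∀ n : ℕ, P ^ n ∣ c) → c = 0)
    (hreg : ∀ m : M, P • m = 0 → m = 0)
    (hmodp : ∀ c : ι → R, (∑ i, c i • w i = 0) → ∀ i, P ∣ c i) :
    ∀ c : ι → R, (∑ i, c i • w i = 0) → ∀ i, c i = 0 := by
  have key : ∀ (n : ℕ) (c : ι → R), (∑ i, c i • w i = 0) → ∀ i, P ^ n ∣ c i := by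
    intro n
    induction n with
    | zero => intro c _ i; simpa using one_dvd _
    | succ n ih =>
      intro c hc i
      have hd := hmodp c hc
      choose d hd using hd
      have hsum : P • ∑ i, d i • w i = 0 := by
        rw [Finset.smul_sum, ← hc]
        refine Finset.sum_congr rfl fun i _ => ?_
        rw [hd i, mul_smul]
      have h0 := hreg _ hsum
      obtain ⟨t, ht⟩ := ih d h0 i
      exact ⟨t, by rw [hd i, ht]; ring⟩
  exact fun c hc i => hsepR _ fun n => key n c hc i

end GenericApprox

-- instantiation for W(k')

lemma wLift_step (x : WittVector p k') :
    ∃ (γ : Fin (Module.finrank (ZMod p) k') → ℤ_[p]) (y : WittVector p k'),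
      x = (∑ i, γ i • wLift p k' i) + (p : ℤ_[p]) • y := by
  set lam := (kBasis p k').repr (resW p k' x) with hlam
  refine ⟨fun i => ((lam i).val : ℤ_[p]), ?_⟩
  have h0 : (x - ∑ i, ((lam i).val : ℤ_[p]) • wLift p k' i) ∈
      Ideal.span {(p : WittVector p k')} := by
    rw [mem_span_p_iff, ← resW_apply, map_sub, resW_sum]
    have hv : ∀ i, PadicInt.toZMod (((lam i).val : ℕ) : ℤ_[p]) = lam i := by
      intro i
      rw [map_natCast]
      exact ZMod.natCast_rightInverse (lam i)
    simp_rw [hv]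
    rw [sub_eq_zero]
    exact ((kBasis p k').sum_repr (resW p k' x)).symm
  rw [Ideal.mem_span_singleton] at h0
  obtain ⟨y, hy⟩ := h0
  refine ⟨y, ?_⟩
  rw [zp_smul, map_natCast, ← hy]
  ring

lemma prec_span_p : IsPrecomplete (Ideal.span {(p : ℤ_[p])}) ℤ_[p] := by
  have h := (inferInstance : IsAdicComplete (IsLocalRing.maximalIdeal ℤ_[p]) ℤ_[p])
  rw [PadicInt.maximalIdeal_eq_span_p] at h
  exact h.toIsPrecomplete

lemma wsep (m : WittVector p k') (hm : ∀ n : ℕ, ∃ y, m = (p : ℤ_[p]) ^ n • y) : m = 0 := by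
  refine eq_zero_of_forall_pow_dvd p k' m fun n => ?_
  obtain ⟨y, hy⟩ := hm n
  refine ⟨y, ?_⟩
  rw [hy, zp_smul, map_pow, map_natCast]

lemma wLift_span (x : WittVector p k') :
    ∃ c : Fin (Module.finrank (ZMod p) k') → ℤ_[p], x = ∑ i, c i • wLift p k' i :=
  aux_span (p : ℤ_[p]) (wLift p k') (prec_span_p p) (wsep p k') (wLift_step p k') x

lemma wLift_indep (c : Fin (Module.finrank (ZMod p) k') → ℤ_[p])
    (hc : ∑ i, c i • wLift p k' i = 0) : ∀ i, c i = 0 := by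
  refine aux_indep (p : ℤ_[p]) (wLift p k') ?_ ?_ ?_ c hc
  · intro a ha
    have : ∀ n : ℕ, a ≡ 0 [SMOD ((IsLocalRing.maximalIdeal ℤ_[p]) ^ n •
        ⊤ : Submodule ℤ_[p] ℤ_[p])] := by
      intro n
      rw [SModEq.sub_mem, Ideal.smul_eq_mul, Ideal.mul_top, sub_zero,
        PadicInt.maximalIdeal_eq_span_p, Ideal.span_singleton_pow, Ideal.mem_span_singleton]
      exact ha n
    exact IsHausdorff.haus (inferInstance : IsHausdorff (IsLocalRing.maximalIdeal ℤ_[p]) ℤ_[p])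
      a this
  · intro m hm
    rw [zp_smul, map_natCast] at hm
    rcases mul_eq_zero.mp hm with h | h
    · exact absurd h (WittVector.p_nonzero p k')
    · exact h
  · intro c hc i
    have h0 : resW p k' (∑ i, c i • wLift p k' i) = 0 := by rw [hc, map_zero]
    rw [resW_sum] at h0
    have hz := Fintype.linearIndependent_iff.mp (kBasis p k').linearIndependent
      (fun i => PadicInt.toZMod (c i)) h0 i
    have : c i ∈ RingHom.ker (PadicInt.toZMod (p := p)) := hz
    rw [PadicInt.ker_toZMod, PadicInt.maximalIdeal_eq_span_p,
      Ideal.mem_span_singleton] at this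
    exact this

noncomputable def basisW : Module.Basis (Fin (Module.finrank (ZMod p) k')) ℤ_[p] (WittVector p k') := by
  refine Module.Basis.mk (v := wLift p k') ?_ ?_
  · exact Fintype.linearIndependent_iff.mpr fun c hc => wLift_indep p k' c hc
  · intro x _
    obtain ⟨c, hc⟩ := wLift_span p k' x
    rw [hc]
    exact Submodule.sum_mem _ fun i _ =>
      Submodule.smul_mem _ _ (Submodule.subset_span ⟨i, rfl⟩)

instance : Module.Free ℤ_[p] (WittVector p k') := Module.Free.of_basis (basisW p k')
instance : Module.Finite ℤ_[p] (WittVector p k') := Module.Finite.of_basis (basisW p k')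

----------------------------------------------------------------
-- Step E : `W(k')` is formally unramified over `ℤ_[p]`

lemma frobenius_sub_pow_mem (v : WittVector p k') :
    WittVector.frobenius v - v ^ p ∈ Ideal.span {(p : WittVector p k')} := by
  rw [mem_span_p_iff, ← resW_apply, map_sub, map_pow, resW_apply, resW_apply,
    WittVector.coeff_frobenius_charP, sub_self]

lemma exists_pow_rep (w : WittVector p k') :
    ∃ v c : WittVector p k', w = v ^ p + (p : WittVector p k') * c := by
  set v := (WittVector.frobeniusEquiv p k').symm w with hv
  have hfv : WittVector.frobenius v = w := (WittVector.frobeniusEquiv p k').apply_symm_apply w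
  obtain ⟨cc, hcc⟩ := Ideal.mem_span_singleton.mp (frobenius_sub_pow_mem p k' v)
  exact ⟨v, cc, by rw [← hfv, ← hcc]; ring⟩

lemma D_mem_span (w : WittVector p k') :
    KaehlerDifferential.D ℤ_[p] (WittVector p k') w ∈
      (Ideal.span {(p : WittVector p k')}) •
        (⊤ : Submodule (WittVector p k') (Ω[(WittVector p k')⁄ℤ_[p]])) := by
  obtain ⟨v, c, rfl⟩ := exists_pow_rep p k' w
  rw [map_add]
  refine Submodule.add_mem _ ?_ ?_
  · rw [Derivation.leibniz_pow, ← Nat.cast_smul_eq_nsmul (WittVector p k')]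
    exact Submodule.smul_mem_smul (Ideal.mem_span_singleton_self _) Submodule.mem_top
  · rw [Derivation.leibniz, Derivation.map_natCast, smul_zero, add_zero]
    exact Submodule.smul_mem_smul (Ideal.mem_span_singleton_self _) Submodule.mem_top

lemma span_p_le_jacobson :
    Ideal.span {(p : WittVector p k')} ≤ Ideal.jacobson ⊥ := by
  intro x hx
  rw [Ideal.mem_jacobson_bot]
  intro y
  apply WittVector.isUnit_of_coeff_zero_ne_zero
  have h1 : (x * y + 1).coeff 0 = resW p k' (x * y + 1) := (resW_apply p k' _).symm
  rw [mem_span_p_iff, ← resW_apply] at hx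
  rw [h1, map_add, map_mul, map_one, hx, zero_mul, zero_add]
  exact one_ne_zero

instance formallyUnramified_W : Algebra.FormallyUnramified ℤ_[p] (WittVector p k') := by
  constructor
  have key : (⊤ : Submodule (WittVector p k') (Ω[(WittVector p k')⁄ℤ_[p]])) ≤
      (Ideal.span {(p : WittVector p k')}) • ⊤ := by
    conv_lhs => rw [← KaehlerDifferential.span_range_derivation ℤ_[p] (WittVector p k')]
    refine Submodule.span_le.mpr ?_
    rintro _ ⟨w, rfl⟩
    exact D_mem_span p k' w
  have fg : (⊤ : Submodule (WittVector p k') (Ω[(WittVector p k')⁄ℤ_[p]])).FG :=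
    Module.finite_def.mp inferInstance
  have htop := Submodule.eq_bot_of_le_smul_of_le_jacobson_bot
    (Ideal.span {(p : WittVector p k')}) ⊤ fg key (span_p_le_jacobson p k')
  constructor
  intro a b
  have ha : ∀ z : Ω[(WittVector p k')⁄ℤ_[p]], z = 0 := by
    intro z
    have hz : z ∈ (⊤ : Submodule (WittVector p k') (Ω[(WittVector p k')⁄ℤ_[p]])) :=
      Submodule.mem_top
    rw [htop] at hz
    simpa using hz
  rw [ha a, ha b]


attribute [local instance] Algebra.TensorProduct.rightAlgebra

lemma ww_smul (a : A) (x : WW p k' A) :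
    a • x = ((1 : WittVector p k') ⊗ₜ[ℤ_[p]] a) * x := rfl

/-- `A ⊗ W ≃ W ⊗ A` as `A`-modules. -/
noncomputable def flipWW : A ⊗[ℤ_[p]] (WittVector p k') ≃ₗ[A] WW p k' A :=
  { (Algebra.TensorProduct.comm ℤ_[p] A (WittVector p k')).toEquiv with
    map_add' := map_add _
    map_smul' := by
      intro a x
      show (Algebra.TensorProduct.comm ℤ_[p] A (WittVector p k')) (a • x) = _
      rw [Algebra.smul_def, map_mul, ww_smul]
      congr 1 }

noncomputable def cWW : Module.Basis (Fin (Module.finrank (ZMod p) k')) A (WW p k' A) :=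
  ((basisW p k').baseChange A).map (flipWW p k' A)

lemma cWW_apply (i : Fin (Module.finrank (ZMod p) k')) :
    cWW p k' A i = (basisW p k' i) ⊗ₜ[ℤ_[p]] (1 : A) := by
  rw [cWW, Module.Basis.map_apply, Module.Basis.baseChange_apply]
  show (Algebra.TensorProduct.comm ℤ_[p] A (WittVector p k')) (1 ⊗ₜ basisW p k' i) = _
  rw [Algebra.TensorProduct.comm_tmul]

noncomputable def algRB : Algebra (PowerSeries A) (SS p k' A) := (AuToSS p k' A).toAlgebra
attribute [local instance] algRB

lemma rb_smul (g : PowerSeries A) (x : SS p k' A) : g • x = AuToSS p k' A g * x := rfl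

/-- the candidate basis vectors of `𝔖_A` over `A⟦u⟧`. -/
noncomputable def vB (i : Fin (Module.finrank (ZMod p) k')) : SS p k' A :=
  PowerSeries.C (R := WW p k' A) (cWW p k' A i)

lemma coeff_smul_C (g : PowerSeries A) (wv : WW p k' A) (n : ℕ) :
    PowerSeries.coeff (R := WW p k' A) n (g • (PowerSeries.C (R := WW p k' A) wv)) =
      (PowerSeries.coeff (R := A) n g) • wv := by
  rw [rb_smul, PowerSeries.coeff_mul_C, AuToSS, PowerSeries.coeff_map, Algebra.smul_def]
  rfl

lemma bB_indep (g : Fin (Module.finrank (ZMod p) k') → PowerSeries A)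
    (hg : ∑ i, g i • vB p k' A i = 0) : ∀ i, g i = 0 := by
  intro i
  ext n
  have h0 : PowerSeries.coeff (R := WW p k' A) n (∑ j, g j • vB p k' A j) = 0 := by
    rw [hg, map_zero]
  rw [map_sum] at h0
  simp_rw [vB, coeff_smul_C] at h0
  have := Fintype.linearIndependent_iff.mp (cWW p k' A).linearIndependent
    (fun j => PowerSeries.coeff (R := A) n (g j)) h0 i
  simpa using this

lemma bB_span (x : SS p k' A) :
    x = ∑ i, (PowerSeries.mk fun n =>
      (cWW p k' A).repr (PowerSeries.coeff (R := WW p k' A) n x) i) • vB p k' A i := by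
  ext n
  rw [map_sum]
  simp_rw [vB, coeff_smul_C, PowerSeries.coeff_mk]
  exact ((cWW p k' A).sum_repr (PowerSeries.coeff (R := WW p k' A) n x)).symm

noncomputable def bB : Module.Basis (Fin (Module.finrank (ZMod p) k')) (PowerSeries A) (SS p k' A) := by
  refine Module.Basis.mk (v := vB p k' A)
    (Fintype.linearIndependent_iff.mpr fun g hg => bB_indep p k' A g hg) ?_
  intro x _
  rw [bB_span p k' A x]
  exact Submodule.sum_mem _ fun i _ =>
    Submodule.smul_mem _ _ (Submodule.subset_span ⟨i, rfl⟩)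

noncomputable instance : Module.Free (PowerSeries A) (SS p k' A) :=
  Module.Free.of_basis (bB p k' A)

noncomputable instance : Module.Finite (PowerSeries A) (SS p k' A) :=
  Module.Finite.of_basis (bB p k' A)

lemma tower_zp_R_B : IsScalarTower ℤ_[p] (PowerSeries A) (SS p k' A) := by
  refine IsScalarTower.of_algebraMap_eq fun z => ?_
  rw [PowerSeries.algebraMap_apply]
  show _ = AuToSS p k' A (algebraMap ℤ_[p] (PowerSeries A) z)
  rw [PowerSeries.algebraMap_apply, AuToSS, PowerSeries.map_C]
  congr 1
  show algebraMap ℤ_[p] (WW p k' A) z = (1 : WittVector p k') ⊗ₜ[ℤ_[p]] (algebraMap ℤ_[p] A z)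
  rw [Algebra.TensorProduct.algebraMap_apply, Algebra.algebraMap_eq_smul_one,
    Algebra.algebraMap_eq_smul_one (A := A), TensorProduct.tmul_smul,
    TensorProduct.smul_tmul']

attribute [local instance] tower_zp_R_B

/-- `W(k') →ₐ[ℤ_[p]] 𝔖_A`. -/
noncomputable def WtoB : WittVector p k' →ₐ[ℤ_[p]] SS p k' A where
  toRingHom := (PowerSeries.C (R := WW p k' A)).comp Algebra.TensorProduct.includeLeftRingHom
  commutes' := by
    intro z
    show PowerSeries.C (R := WW p k' A) ((algebraMap ℤ_[p] (WittVector p k') z) ⊗ₜ[ℤ_[p]] 1) = _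
    rw [PowerSeries.algebraMap_apply]
    exact congrArg (PowerSeries.C (R := WW p k' A)) (Algebra.TensorProduct.algebraMap_apply z).symm

/-- `A⟦u⟧ ⊗ W(k') →ₐ[A⟦u⟧] 𝔖_A`. -/
noncomputable def epsAlg : (PowerSeries A) ⊗[ℤ_[p]] (WittVector p k') →ₐ[PowerSeries A] SS p k' A :=
  Algebra.TensorProduct.lift (Algebra.ofId (PowerSeries A) (SS p k' A)) (WtoB p k' A)
    (fun x y => Commute.all _ _)

lemma epsAlg_basis (i : Fin (Module.finrank (ZMod p) k')) :
    epsAlg p k' A (((basisW p k').baseChange (PowerSeries A)) i) = bB p k' A i := by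
  rw [Module.Basis.baseChange_apply, epsAlg, Algebra.TensorProduct.lift_tmul, map_one, one_mul]
  rw [show ⇑(bB p k' A) = vB p k' A from Module.Basis.coe_mk _ _, vB, cWW_apply]
  rfl

lemma epsAlg_bijective : Function.Bijective (epsAlg p k' A) := by
  have h : (epsAlg p k' A).toLinearMap =
      (((basisW p k').baseChange (PowerSeries A)).equiv (bB p k' A)
        (Equiv.refl _)).toLinearMap := by
    refine Module.Basis.ext ((basisW p k').baseChange (PowerSeries A)) fun i => ?_
    rw [LinearEquiv.coe_coe, Module.Basis.equiv_apply, Equiv.refl_apply]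
    exact epsAlg_basis p k' A i
  have hfun : ⇑(epsAlg p k' A) =
      ⇑(((basisW p k').baseChange (PowerSeries A)).equiv (bB p k' A) (Equiv.refl _)) :=
    funext fun x => LinearMap.congr_fun h x
  rw [hfun]
  exact (((basisW p k').baseChange (PowerSeries A)).equiv (bB p k' A) (Equiv.refl _)).bijective

lemma unramified_R_B : Algebra.FormallyUnramified (PowerSeries A) (SS p k' A) := by
  haveI : Algebra.FormallyUnramified (PowerSeries A)
      ((PowerSeries A) ⊗[ℤ_[p]] (WittVector p k')) := inferInstance
  exact Algebra.FormallyUnramified.of_equiv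
    (AlgEquiv.ofBijective (epsAlg p k' A) (epsAlg_bijective p k' A))


set_option synthInstance.maxHeartbeats 1000000 in
/-- Let `A` be a `p`-adically complete `ℤ_p`-algebra.  An `𝔖_A`-module is
projective if and only if it is projective as an `A⟦u⟧`-module, via the natural ring map
`A⟦u⟧ → 𝔖_A`. -/
theorem statement_0
    (hA : IsAdicComplete (Ideal.span {(p : A)}) A)
    (M : Type) [AddCommGroup M] [Module (SS p k' A) M] :
    letI : Module (PowerSeries A) M := Module.compHom M (AuToSS p k' A)
    (Module.Projective (SS p k' A) M ↔ Module.Projective (PowerSeries A) M) := by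
  letI : Module (PowerSeries A) M := Module.compHom M (AuToSS p k' A)
  haveI tower : IsScalarTower (PowerSeries A) (SS p k' A) M := by
    constructor
    intro r b m
    show (AuToSS p k' A r * b) • m = AuToSS p k' A r • (b • m)
    rw [mul_smul]
  haveI := unramified_R_B p k' A
  constructor
  · intro hM
    obtain ⟨s, hs⟩ := Module.projective_def.mp hM
    haveI : Module.Projective (PowerSeries A) (M →₀ SS p k' A) := inferInstance
    refine Module.Projective.of_split (LinearMap.restrictScalars (PowerSeries A) s)
      (LinearMap.restrictScalars (PowerSeries A) (Finsupp.linearCombination (SS p k' A) id)) ?_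
    ext m
    exact hs m
  · intro hM
    exact Algebra.FormallyUnramified.projective_of_restrictScalars
      (R := PowerSeries A) (S := SS p k' A) M
end
end

section
/- Let A be a p-adically complete Z_p-algebra and E(u) ∈ W(k')[u] an Eisenstein polynomial. Then the image of E(u) in S_A is a non-zero-divisor. -/
open scoped TensorProduct
open PowerSeries

noncomputable section

variable (p : ℕ) [Fact p.Prime]
variable (k' : Type) [Field k'] [Fintype k'] [CharP k' p]

section St2AuxSect
set_option linter.unusedSectionVars false
set_option maxHeartbeats 1000000
namespace St2Aux

local notation "W" => WittVector p k'



lemma pow_p_mul_eq (m : ℕ) (b : W) :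
    (p : W) ^ m * b = WittVector.verschiebung^[m] (WittVector.frobenius^[m] b) := by
  have h := congr_fun (WittVector.verschiebung_frobenius_comm.comp_iterate m) b
  rw [Function.comp_apply] at h
  rw [← h]
  have h2 : ((WittVector.verschiebung ∘ WittVector.frobenius) : W → W)
      = fun x => (p : W) * x := by
    funext x
    rw [Function.comp_apply, WittVector.verschiebung_frobenius, mul_comm]
  rw [h2, mul_left_iterate]

lemma coeff_iterate_verschiebung_eq_zero (m : ℕ) (z : W) :
    ∀ i < m, (WittVector.verschiebung^[m] z).coeff i = 0 := by
  induction m generalizing z with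
  | zero => intro i hi; omega
  | succ n ih =>
    intro i hi
    rw [Function.iterate_succ_apply']
    match i with
    | 0 => rw [WittVector.verschiebung_coeff_zero]
    | (j+1) =>
      rw [WittVector.verschiebung_coeff_succ]
      exact ih z j (by omega)

lemma pow_p_dvd_iff (m : ℕ) (a : W) :
    (p : W) ^ m ∣ a ↔ ∀ i < m, a.coeff i = 0 := by
  constructor
  · rintro ⟨b, rfl⟩ i hi
    rw [pow_p_mul_eq]
    exact coeff_iterate_verschiebung_eq_zero p k' m _ i hi
  · intro h
    set c : W := WittVector.mk p (fun n => a.coeff (n + m)) with hc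
    have hVc : WittVector.verschiebung^[m] c = a := by
      ext i
      rcases lt_or_ge i m with him | him
      · rw [coeff_iterate_verschiebung_eq_zero p k' m c i him, h i him]
      · obtain ⟨j, rfl⟩ : ∃ j, i = j + m := ⟨i - m, by omega⟩
        rw [WittVector.iterate_verschiebung_coeff, hc, WittVector.coeff_mk]
    obtain ⟨b, hb⟩ := (WittVector.frobenius_bijective p k').surjective.iterate m c
    exact ⟨b, by rw [pow_p_mul_eq, hb, hVc]⟩

lemma eq_zero_of_forall_pow_p_dvd (a : W) (h : ∀ m, (p : W) ^ m ∣ a) : a = 0 := by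
  ext i
  have := (pow_p_dvd_iff p k' (i + 1) a).1 (h (i + 1)) i (by omega)
  simpa using this

lemma constantCoeff_surjective :
    Function.Surjective (WittVector.constantCoeff : W →+* k') := by
  intro a
  exact ⟨WittVector.mk p (fun _ => a), by simp [WittVector.constantCoeff, WittVector.coeff_mk]⟩

lemma constantCoeff_eq_zero_iff (x : W) :
    WittVector.constantCoeff x = 0 ↔ (p : W) ∣ x := by
  rw [← pow_one (p : W), pow_p_dvd_iff]
  constructor
  · intro h i hi
    interval_cases i
    exact h
  · intro h
    exact h 0 (by omega)




noncomputable instance : Algebra (ZMod p) k' := ZMod.algebra k' p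

/-- Any two ring homs `ℤ_p →+* k'` agree. -/
lemma ringHom_zp_eq (g₁ g₂ : ℤ_[p] →+* k') : g₁ = g₂ := by
  ext c
  have hker : c - (((PadicInt.toZMod c).val : ℕ) : ℤ_[p]) ∈ RingHom.ker (PadicInt.toZMod (p := p)) := by
    rw [RingHom.mem_ker, map_sub, map_natCast, ZMod.natCast_val, ZMod.cast_id, sub_self]
  rw [PadicInt.ker_toZMod, PadicInt.maximalIdeal_eq_span_p,
    Ideal.mem_span_singleton] at hker
  obtain ⟨d, hd⟩ := hker
  have hc : c = (((PadicInt.toZMod c).val : ℕ) : ℤ_[p]) + (p : ℤ_[p]) * d := by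
    rw [← hd]; ring
  have hp : ∀ g : ℤ_[p] →+* k', g c = (((PadicInt.toZMod c).val : ℕ) : k') := by
    intro g
    have h := congrArg g hc
    rw [map_add, map_mul, map_natCast, map_natCast, CharP.cast_eq_zero k' p, zero_mul,
      add_zero] at h
    exact h
  rw [hp g₁, hp g₂]

noncomputable def resZ : ℤ_[p] →+* k' :=
  (WittVector.constantCoeff).comp (algebraMap ℤ_[p] W)

lemma resZ_eq_zero_iff (c : ℤ_[p]) : resZ p k' c = 0 ↔ (p : ℤ_[p]) ∣ c := by
  have h1 : IsLocalRing.maximalIdeal ℤ_[p] ≤ RingHom.ker (resZ p k') := by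
    rw [PadicInt.maximalIdeal_eq_span_p, Ideal.span_le, Set.singleton_subset_iff]
    simp only [SetLike.mem_coe, RingHom.mem_ker, map_natCast, CharP.cast_eq_zero]
  have h2 : RingHom.ker (resZ p k') ≠ ⊤ := RingHom.ker_ne_top _
  have h3 := ((IsLocalRing.maximalIdeal.isMaximal ℤ_[p]).eq_of_le h2 h1).symm
  rw [show (resZ p k' c = 0 ↔ c ∈ RingHom.ker (resZ p k')) from Iff.rfl, h3,
    PadicInt.maximalIdeal_eq_span_p, Ideal.mem_span_singleton]

lemma resZ_eq (c : ℤ_[p]) :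
    resZ p k' c = algebraMap (ZMod p) k' (PadicInt.toZMod c) := by
  have := ringHom_zp_eq p k' (resZ p k')
    ((algebraMap (ZMod p) k').comp (PadicInt.toZMod (p := p)))
  exact DFunLike.congr_fun this c





instance : Module.Finite (ZMod p) k' := Module.Finite.of_finite

/-- index type for a basis of `k'` over `𝔽_p`. -/
abbrev BI : Type := Fin (Module.finrank (ZMod p) k')

noncomputable def kbasis : Module.Basis (BI p k') (ZMod p) k' := Module.finBasis (ZMod p) k'

noncomputable def wlift (i : BI p k') : W :=
  (constantCoeff_surjective p k' (kbasis p k' i)).choose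

lemma wlift_spec (i : BI p k') :
    WittVector.constantCoeff (wlift p k' i) = kbasis p k' i :=
  (constantCoeff_surjective p k' (kbasis p k' i)).choose_spec

noncomputable def Phi : (BI p k' → ℤ_[p]) →ₗ[ℤ_[p]] W where
  toFun c := ∑ i, c i • wlift p k' i
  map_add' c c' := by simp [add_smul, Finset.sum_add_distrib]
  map_smul' a c := by simp [Finset.smul_sum, smul_smul]

lemma res_Phi (c : BI p k' → ℤ_[p]) :
    WittVector.constantCoeff (Phi p k' c) = ∑ i, PadicInt.toZMod (c i) • kbasis p k' i := by
  show WittVector.constantCoeff (∑ i, c i • wlift p k' i) = _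
  rw [map_sum]
  congr 1
  funext i
  rw [Algebra.smul_def, map_mul, wlift_spec]
  rw [show (WittVector.constantCoeff : W →+* k') (algebraMap ℤ_[p] W (c i)) = resZ p k' (c i)
    from rfl, resZ_eq, Algebra.smul_def]

lemma dvd_of_res_Phi_eq_zero (c : BI p k' → ℤ_[p])
    (h : WittVector.constantCoeff (Phi p k' c) = 0) :
    ∀ i, (p : ℤ_[p]) ∣ c i := by
  intro i
  rw [res_Phi] at h
  have h2 := Fintype.linearIndependent_iff.1 (kbasis p k').linearIndependent
    (fun j => PadicInt.toZMod (c j)) h i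
  have h3 : c i ∈ RingHom.ker (PadicInt.toZMod (p := p)) := h2
  rw [PadicInt.ker_toZMod, PadicInt.maximalIdeal_eq_span_p, Ideal.mem_span_singleton] at h3
  exact h3

lemma exists_approx (x : W) : ∃ c, (p : W) ∣ (x - Phi p k' c) := by
  refine ⟨fun i => (((kbasis p k').repr (WittVector.constantCoeff x)) i : ZMod p).val, ?_⟩
  rw [← constantCoeff_eq_zero_iff, map_sub, res_Phi]
  have : ∀ i : BI p k',
      PadicInt.toZMod ((((((kbasis p k').repr (WittVector.constantCoeff x)) i : ZMod p).val : ℕ)) : ℤ_[p])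
        = ((kbasis p k').repr (WittVector.constantCoeff x)) i := by
    intro i
    rw [map_natCast, ZMod.natCast_val, ZMod.cast_id]
  simp only [this]
  rw [← Module.Basis.sum_equivFun (kbasis p k') (WittVector.constantCoeff x)]
  simp [Module.Basis.equivFun_apply]

lemma Phi_injective : Function.Injective (Phi p k') := by
  have key : ∀ (n : ℕ) (c : BI p k' → ℤ_[p]), Phi p k' c = 0 → ∀ i, (p : ℤ_[p]) ^ n ∣ c i := by
    intro n
    induction n with
    | zero => intro c _ i; simpa using one_dvd _
    | succ n ih =>
      intro c h i
      have h0 : WittVector.constantCoeff (Phi p k' c) = 0 := by rw [h]; simp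
      have hd := dvd_of_res_Phi_eq_zero p k' c h0
      choose d hd' using hd
      have hc : c = (p : ℤ_[p]) • d := funext fun j => by
        rw [Pi.smul_apply, smul_eq_mul, ← hd' j]
      have h2 : (0 : W) = (p : W) * Phi p k' d := by
        rw [← h, hc, map_smul, Algebra.smul_def, map_natCast]
      have hpn : (p : W) ≠ 0 := (WittVector.irreducible p).ne_zero
      have h3 : Phi p k' d = 0 := by
        rcases mul_eq_zero.1 h2.symm with h | h
        · exact absurd h hpn
        · exact h
      rw [hc, Pi.smul_apply, smul_eq_mul, pow_succ']
      exact mul_dvd_mul_left _ (ih d h3 i)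
  have sep : ∀ x : ℤ_[p], (∀ n, (p : ℤ_[p]) ^ n ∣ x) → x = 0 := by
    intro x hx
    have hH : IsHausdorff (IsLocalRing.maximalIdeal ℤ_[p]) ℤ_[p] := inferInstance
    refine hH.haus x fun n => ?_
    rw [SModEq.zero]
    obtain ⟨y, hy⟩ := hx n
    have hpn : (p : ℤ_[p]) ^ n ∈ IsLocalRing.maximalIdeal ℤ_[p] ^ n := by
      rw [PadicInt.maximalIdeal_eq_span_p]
      exact Ideal.pow_mem_pow (Ideal.mem_span_singleton_self _) n
    rw [hy]
    exact Submodule.smul_mem_smul hpn trivial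
  rw [injective_iff_map_eq_zero]
  intro c h
  funext i
  exact sep (c i) (fun n => key n c h i)
  






/-- one approximation step: the coefficient vector. -/
noncomputable def stepC (y : W) : BI p k' → ℤ_[p] := (exists_approx p k' y).choose

/-- one approximation step: the remainder divided by `p`. -/
noncomputable def stepR (y : W) : W := (exists_approx p k' y).choose_spec.choose

lemma mem_smul_top_iff {R : Type*} [CommRing R] (I : Ideal R) (x : R) :
    x ∈ I • (⊤ : Submodule R R) ↔ x ∈ I := by
  rw [Ideal.smul_top_eq_map, Algebra.algebraMap_self, Ideal.map_id, Submodule.restrictScalars_self]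

lemma step_spec (y : W) : y = Phi p k' (stepC p k' y) + (p : W) * stepR p k' y := by
  have h : y - Phi p k' (stepC p k' y) = (p : W) * stepR p k' y :=
    (exists_approx p k' y).choose_spec.choose_spec
  rw [← h]; ring

noncomputable def rseq (x : W) : ℕ → W := fun n => (stepR p k')^[n] x

lemma rseq_succ (x : W) (n : ℕ) :
    rseq p k' x n = Phi p k' (stepC p k' (rseq p k' x n)) + (p : W) * rseq p k' x (n + 1) := by
  have : rseq p k' x (n + 1) = stepR p k' (rseq p k' x n) := by
    unfold rseq; rw [Function.iterate_succ_apply']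
  rw [this]
  exact step_spec p k' (rseq p k' x n)

noncomputable def Sseq (x : W) (n : ℕ) : BI p k' → ℤ_[p] :=
  ∑ k ∈ Finset.range n, (p : ℤ_[p]) ^ k • stepC p k' (rseq p k' x k)

lemma Sseq_closed (x : W) (n : ℕ) :
    x = Phi p k' (Sseq p k' x n) + (p : W) ^ n * rseq p k' x n := by
  induction n with
  | zero => simp [Sseq, rseq]
  | succ n ih =>
    have h1 : Sseq p k' x (n + 1)
        = Sseq p k' x n + (p : ℤ_[p]) ^ n • stepC p k' (rseq p k' x n) := by
      unfold Sseq; rw [Finset.sum_range_succ]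
    have h2 : ((p : ℤ_[p]) ^ n) • Phi p k' (stepC p k' (rseq p k' x n))
        = (p : W) ^ n * Phi p k' (stepC p k' (rseq p k' x n)) := by
      rw [Algebra.smul_def, map_pow, map_natCast]
    have key : Phi p k' (Sseq p k' x (n + 1)) + (p : W) ^ (n + 1) * rseq p k' x (n + 1)
        = Phi p k' (Sseq p k' x n) + (p : W) ^ n * rseq p k' x n := by
      nth_rewrite 1 [rseq_succ p k' x n]
      rw [h1, map_add, map_smul, h2]
      ring
    rw [key]; exact ih

lemma Phi_surjective : Function.Surjective (Phi p k') := by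
  intro x
  -- Cauchy property of partial sums, componentwise
  have cauchy : ∀ i : BI p k', ∀ {m n : ℕ}, m ≤ n →
      Sseq p k' x m i ≡ Sseq p k' x n i
        [SMOD ((IsLocalRing.maximalIdeal ℤ_[p]) ^ m • ⊤ : Submodule ℤ_[p] ℤ_[p])] := by
    intro i m n hmn
    rw [SModEq.sub_mem]
    have hdvd : (p : ℤ_[p]) ^ m ∣ Sseq p k' x m i - Sseq p k' x n i := by
      have hsplit : Sseq p k' x n i - Sseq p k' x m i
          = ∑ k ∈ Finset.Ico m n, ((p : ℤ_[p]) ^ k • stepC p k' (rseq p k' x k)) i := by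
        unfold Sseq
        rw [← Finset.sum_range_add_sum_Ico _ hmn]
        simp [Finset.sum_apply]
      rw [dvd_sub_comm]  -- adjust sign
      rw [hsplit]
      refine Finset.dvd_sum fun k hk => ?_
      have hk' := (Finset.mem_Ico.1 hk).1
      rw [Pi.smul_apply, smul_eq_mul]
      exact Dvd.dvd.mul_right (pow_dvd_pow _ hk') _
    obtain ⟨y, hy⟩ := hdvd
    have hpn : (p : ℤ_[p]) ^ m ∈ IsLocalRing.maximalIdeal ℤ_[p] ^ m := by
      rw [PadicInt.maximalIdeal_eq_span_p]
      exact Ideal.pow_mem_pow (Ideal.mem_span_singleton_self _) m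
    rw [hy]
    exact Submodule.smul_mem_smul hpn trivial
  have prec : IsPrecomplete (IsLocalRing.maximalIdeal ℤ_[p]) ℤ_[p] := inferInstance
  have hL : ∀ i : BI p k', ∃ L : ℤ_[p], ∀ n,
      Sseq p k' x n i ≡ L [SMOD ((IsLocalRing.maximalIdeal ℤ_[p]) ^ n • ⊤ : Submodule ℤ_[p] ℤ_[p])] :=
    fun i => prec.prec (fun {m n} h => cauchy i h)
  choose L hLs using hL
  refine ⟨L, ?_⟩
  have hdvd : ∀ n, (p : W) ^ n ∣ x - Phi p k' L := by
    intro n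
    have hds : ∀ i, (p : ℤ_[p]) ^ n ∣ L i - Sseq p k' x n i := by
      intro i
      have h := (SModEq.sub_mem).1 (hLs i n)
      rw [mem_smul_top_iff, PadicInt.maximalIdeal_eq_span_p, Ideal.span_singleton_pow,
        Ideal.mem_span_singleton] at h
      exact (dvd_sub_comm).1 h
    choose M hM using hds
    have hLe : Phi p k' L = Phi p k' (Sseq p k' x n) + (p : W) ^ n * Phi p k' M := by
      have hfun : L = Sseq p k' x n + (p : ℤ_[p]) ^ n • M := by
        funext i
        rw [Pi.add_apply, Pi.smul_apply, smul_eq_mul, ← hM i]; ring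
      rw [hfun, map_add, map_smul, Algebra.smul_def, map_pow, map_natCast]
    refine ⟨rseq p k' x n - Phi p k' M, ?_⟩
    rw [hLe]
    nth_rewrite 1 [Sseq_closed p k' x n]
    ring
  have h0 := eq_zero_of_forall_pow_p_dvd p k' (x - Phi p k' L) hdvd
  exact (sub_eq_zero.1 h0).symm


lemma Phi_bij : Function.Bijective (Phi p k') :=
  ⟨Phi_injective p k', Phi_surjective p k'⟩





noncomputable def wequiv : (BI p k' → ℤ_[p]) ≃ₗ[ℤ_[p]] W :=
  LinearEquiv.ofBijective (Phi p k') (Phi_bij p k')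

variable (A : Type) [CommRing A] [Algebra ℤ_[p] A]

noncomputable def Psi : WW p k' A ≃ₗ[ℤ_[p]] (BI p k' → A) :=
  (TensorProduct.congr (wequiv p k').symm (LinearEquiv.refl ℤ_[p] A)).trans
    ((TensorProduct.comm ℤ_[p] (BI p k' → ℤ_[p]) A).trans
      (TensorProduct.piScalarRight ℤ_[p] ℤ_[p] A (BI p k')))

lemma haus_WW (hA : IsAdicComplete (Ideal.span {(p : A)}) A) (x : WW p k' A)
    (h : ∀ n, x ∈ Ideal.span {(p : WW p k' A)} ^ n) : x = 0 := by
  have hx : Psi p k' A x = 0 := by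
    funext i
    refine hA.toIsHausdorff.haus (Psi p k' A x i) fun n => ?_
    rw [SModEq.zero, mem_smul_top_iff, Ideal.span_singleton_pow]
    have hn := h n
    rw [Ideal.span_singleton_pow, Ideal.mem_span_singleton] at hn
    obtain ⟨y, hy⟩ := hn
    have hsm : x = ((p ^ n : ℕ) : WW p k' A) * y := by rw [hy]; push_cast; ring
    have hsm2 : x = (p ^ n : ℕ) • y := by rw [hsm, nsmul_eq_mul]
    have : Psi p k' A x = (p ^ n : ℕ) • Psi p k' A y := by rw [hsm2, map_nsmul]
    rw [this, Ideal.mem_span_singleton, Pi.smul_apply, nsmul_eq_mul]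
    push_cast
    exact Dvd.intro _ rfl
  have := congrArg (Psi p k' A).symm hx
  rwa [LinearEquiv.symm_apply_apply, map_zero] at this


end St2Aux
end St2AuxSect

variable (A : Type) [CommRing A] [Algebra ℤ_[p] A]

/-- Let `A` be a `p`-adically complete `ℤ_p`-algebra and `E(u) ∈ W(k')[u]`
an Eisenstein polynomial.  Then the image of `E(u)` in `𝔖_A` is a non-zero-divisor. -/
theorem statement_2
    (hA : IsAdicComplete (Ideal.span {(p : A)}) A)
    (e' : ℕ) (E : Polynomial (WittVector p k')) (hE : IsEisenstein p k' e' E) :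
    polyToSS p k' A E ∈ nonZeroDivisors (SS p k' A) := by
  rw [mem_nonZeroDivisors_iff_right]
  intro g hg
  set J : Ideal (WW p k' A) := Ideal.span {(p : WW p k' A)} with hJ
  obtain ⟨hmonic, hdeg, he1, hcoeff, -⟩ := hE
  have hE1 : (PowerSeries.coeff (R := WW p k' A) e') (polyToSS p k' A E) = 1 := by
    rw [polyToSS, PowerSeries.coeff_mk, ← hdeg, hmonic.coeff_natDegree,
      Algebra.TensorProduct.one_def]
  have key : ∀ (k n : ℕ), (PowerSeries.coeff (R := WW p k' A) n) g ∈ J ^ k := by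
    intro k
    induction k with
    | zero => intro n; simp [Ideal.one_eq_top]
    | succ k ih =>
      intro n
      have h0 : (PowerSeries.coeff (R := WW p k' A) (n + e')) (g * polyToSS p k' A E) = 0 := by
        rw [hg, map_zero]
      rw [PowerSeries.coeff_mul] at h0
      have hmem : ((n, e') : ℕ × ℕ) ∈ Finset.HasAntidiagonal.antidiagonal (n + e') := by
        rw [Finset.HasAntidiagonal.mem_antidiagonal]
      rw [← Finset.add_sum_erase _ _ hmem, hE1, mul_one] at h0
      have hgn : (PowerSeries.coeff (R := WW p k' A) n) g
          = -∑ ij ∈ (Finset.HasAntidiagonal.antidiagonal (n + e')).erase (n, e'),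
              (PowerSeries.coeff (R := WW p k' A) ij.1) g
                * (PowerSeries.coeff (R := WW p k' A) ij.2) (polyToSS p k' A E) :=
        eq_neg_of_add_eq_zero_left h0
      rw [hgn]
      refine neg_mem (Ideal.sum_mem _ fun ij hij => ?_)
      obtain ⟨hne, hsum⟩ := Finset.mem_erase.1 hij
      rw [Finset.HasAntidiagonal.mem_antidiagonal] at hsum
      rcases lt_trichotomy ij.2 e' with hlt | heq | hgt
      · -- coefficient of E in p·W
        have hcE := hcoeff ij.2 hlt
        rw [Ideal.mem_span_singleton] at hcE
        obtain ⟨y, hy⟩ := hcE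
        have hterm : (PowerSeries.coeff (R := WW p k' A) ij.2) (polyToSS p k' A E)
            = (p : WW p k' A) * (y ⊗ₜ[ℤ_[p]] (1 : A)) := by
          rw [polyToSS, PowerSeries.coeff_mk, hy]
          have hp : ((p : WittVector p k') ⊗ₜ[ℤ_[p]] (1 : A)) = (p : WW p k' A) := by
            rw [show ((p : WittVector p k') ⊗ₜ[ℤ_[p]] (1 : A))
                  = Algebra.TensorProduct.includeLeftRingHom (p : WittVector p k') from rfl,
              map_natCast]
          rw [← hp, Algebra.TensorProduct.tmul_mul_tmul, one_mul]
        rw [hterm, pow_succ]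
        exact Ideal.mul_mem_mul (ih ij.1) (Ideal.mem_span_singleton.2 ⟨_, rfl⟩)
      · exfalso
        apply hne
        have : ij.1 = n := by omega
        exact Prod.ext this heq
      · have : (PowerSeries.coeff (R := WW p k' A) ij.2) (polyToSS p k' A E) = 0 := by
          rw [polyToSS, PowerSeries.coeff_mk,
            Polynomial.coeff_eq_zero_of_natDegree_lt (by omega), TensorProduct.zero_tmul]
        rw [this, mul_zero]
        exact zero_mem _
  ext n
  rw [map_zero]
  exact St2Aux.haus_WW p k' A hA _ (fun k => key k n)
end
end

section
/- Let A be a commutative ring, M a finitely generated projective A[[u]]-module, and B an A-algebra. Then the natural map M ⊗_A B → M ⊗_{A[[u]]} B[[u]] exhibits M ⊗_{A[[u]]} B[[u]] as the u-adic completion of M ⊗_A B: the induced B[[u]]-linear map lim_n (M ⊗_A B)/u^n(M ⊗_A B) → M ⊗_{A[[u]]} B[[u]] is an isomorphism. In particular, the u-adic completion of M ⊗_A B is a finitely generated projective B[[u]]-module. -/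
open scoped TensorProduct
open PowerSeries

noncomputable section

namespace Statement3Aux

variable {R : Type*} [CommRing R]

theorem coeff_sum_C_X_pow (a : ℕ → R) (n j : ℕ) :
    (coeff (R := R) j) (∑ i ∈ Finset.range n, C (R := R) (a i) * X ^ i) = if j < n then a j else 0 := by
  rw [map_sum]
  simp only [coeff_C_mul, coeff_X_pow, mul_ite, mul_one, mul_zero]
  rw [Finset.sum_ite_eq]
  simp [Finset.mem_range]

theorem exists_decomp (n : ℕ) (s : R⟦X⟧) :
    ∃ r, s = (∑ p ∈ Finset.range n, C (R := R) (coeff (R := R) p s) * X ^ p) + X ^ n * r := by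
  have h : (X : R⟦X⟧) ^ n ∣ s - ∑ p ∈ Finset.range n, C (R := R) (coeff (R := R) p s) * X ^ p := by
    rw [X_pow_dvd_iff]
    intro m hm
    rw [map_sub, coeff_sum_C_X_pow, if_pos hm, sub_self]
  obtain ⟨r, hr⟩ := h
  exact ⟨r, by rw [← hr]; ring⟩

theorem smul_top_ideal (I : Ideal R) : (I • ⊤ : Submodule R R) = I := by
  rw [Ideal.smul_eq_mul, Ideal.mul_top]

theorem isAdicComplete_powerSeries (B : Type*) [CommRing B] :
    IsAdicComplete (Ideal.span {(X : B⟦X⟧)}) B⟦X⟧ := by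
  have hmem : ∀ (n : ℕ) (f : B⟦X⟧),
      f ∈ ((Ideal.span {(X : B⟦X⟧)}) ^ n • ⊤ : Submodule B⟦X⟧ B⟦X⟧) ↔
        ∀ m < n, coeff (R := B) m f = 0 := by
    intro n f
    rw [smul_top_ideal, Ideal.span_singleton_pow, Ideal.mem_span_singleton, X_pow_dvd_iff]
  refine { toIsHausdorff := ⟨?_⟩, toIsPrecomplete := ⟨?_⟩ }
  · intro f hf
    ext m
    have := (hmem (m + 1) f).1 (by simpa using (SModEq.sub_mem.1 (hf (m + 1))))
    simpa using this m (Nat.lt_succ_self m)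
  · intro f hf
    refine ⟨PowerSeries.mk fun i => coeff (R := B) i (f (i + 1)), fun n => ?_⟩
    rw [SModEq.sub_mem]
    rw [hmem]
    intro m hm
    rw [map_sub, coeff_mk]
    have key : ∀ {a b : ℕ}, a ≤ b → m < a → coeff (R := B) m (f a) = coeff (R := B) m (f b) := by
      intro a b hab hma
      have h1 := (hmem a _).1 (SModEq.sub_mem.1 (hf hab)) m hma
      rw [map_sub] at h1
      exact sub_eq_zero.1 h1
    rcases le_total n (m + 1) with h | h
    · rw [key h hm, sub_self]
    · rw [← key h (Nat.lt_succ_self m), sub_self]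


theorem mem_smul_top_of_map {N P : Type*} [AddCommGroup N] [Module R N] [AddCommGroup P]
    [Module R P] (I : Ideal R) (ff : N →ₗ[R] P) {x : N}
    (hx : x ∈ (I • ⊤ : Submodule R N)) : ff x ∈ (I • ⊤ : Submodule R P) := by
  have h : ff x ∈ (I • ⊤ : Submodule R N).map ff := ⟨x, hx, rfl⟩
  rw [Submodule.map_smul''] at h
  exact Submodule.smul_mono le_rfl le_top h

theorem isAdicComplete_pi (I : Ideal R) (k : ℕ) [IsAdicComplete I R] :
    IsAdicComplete I (Fin k → R) := by
  have hmem : ∀ (n : ℕ) (x : Fin k → R),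
      x ∈ (I ^ n • ⊤ : Submodule R (Fin k → R)) ↔
        ∀ i, x i ∈ (I ^ n • ⊤ : Submodule R R) := by
    intro n x
    constructor
    · intro hx i
      exact mem_smul_top_of_map (I ^ n) (LinearMap.proj i) hx
    · intro hx
      rw [← Finset.univ_sum_single x]
      refine Submodule.sum_mem _ fun i _ => ?_
      exact mem_smul_top_of_map (I ^ n) (LinearMap.single R (fun _ => R) i) (hx i)
  refine { toIsHausdorff := ⟨?_⟩, toIsPrecomplete := ⟨?_⟩ }
  · intro x hx
    funext i
    refine IsHausdorff.haus (IsAdicComplete.toIsHausdorff (I := I) (M := R)) (x i) fun n => ?_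
    rw [SModEq.sub_mem, sub_zero]
    have := (hmem n x).1 (by simpa using SModEq.sub_mem.1 (hx n))
    exact this i
  · intro f hf
    have hcomp : ∀ i, ∃ L, ∀ n, f n i ≡ L [SMOD (I ^ n • ⊤ : Submodule R R)] := by
      intro i
      refine IsPrecomplete.prec (IsAdicComplete.toIsPrecomplete (I := I) (M := R))
        (f := fun n => f n i) ?_
      intro m n hmn
      rw [SModEq.sub_mem]
      have := (hmem m _).1 (SModEq.sub_mem.1 (hf hmn))
      simpa using this i
    choose L hL using hcomp
    refine ⟨L, fun n => ?_⟩
    rw [SModEq.sub_mem]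
    rw [hmem]
    intro i
    simpa using SModEq.sub_mem.1 (hL i n)

theorem isAdicComplete_of_retract {N P : Type*} [AddCommGroup N] [Module R N] [AddCommGroup P]
    [Module R P] (I : Ideal R) [IsAdicComplete I N] (σ : P →ₗ[R] N) (π : N →ₗ[R] P)
    (h : ∀ x, π (σ x) = x) : IsAdicComplete I P := by
  refine { toIsHausdorff := ⟨?_⟩, toIsPrecomplete := ⟨?_⟩ }
  · intro x hx
    have hσ : σ x = 0 := by
      refine IsHausdorff.haus (IsAdicComplete.toIsHausdorff (I := I) (M := N)) (σ x) fun n => ?_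
      rw [SModEq.sub_mem, sub_zero]
      have hx' := SModEq.sub_mem.1 (hx n)
      rw [sub_zero] at hx'
      exact mem_smul_top_of_map (I ^ n) σ hx'
    rw [← h x, hσ, map_zero]
  · intro f hf
    have hc : ∃ L, ∀ n, σ (f n) ≡ L [SMOD (I ^ n • ⊤ : Submodule R N)] := by
      refine IsPrecomplete.prec (IsAdicComplete.toIsPrecomplete (I := I) (M := N)) ?_
      intro m n hmn
      rw [SModEq.sub_mem, ← map_sub]
      exact mem_smul_top_of_map (I ^ m) σ (SModEq.sub_mem.1 (hf hmn))
    obtain ⟨L, hL⟩ := hc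
    refine ⟨π L, fun n => ?_⟩
    rw [SModEq.sub_mem]
    have := mem_smul_top_of_map (I ^ n) π (SModEq.sub_mem.1 (hL n))
    rw [map_sub, h] at this
    exact this

theorem isAdicComplete_of_finite_projective (I : Ideal R) (P : Type*) [AddCommGroup P]
    [Module R P] [Module.Finite R P] [Module.Projective R P] [IsAdicComplete I R] :
    IsAdicComplete I P := by
  obtain ⟨k, π, hπ⟩ := Module.Finite.exists_fin' R P
  obtain ⟨σ, hσ⟩ := Module.projective_lifting_property π LinearMap.id hπ
  haveI := isAdicComplete_pi I k
  refine isAdicComplete_of_retract I σ π fun x => ?_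
  have := congrArg (fun ff => ff x) (congrArg DFunLike.coe hσ)
  simpa using this

end Statement3Aux

set_option maxHeartbeats 2000000

/-- Let `A` be a commutative ring, `M` a finitely generated projective
`A⟦u⟧`-module, and `B` an `A`-algebra.  Then the natural map
`M ⊗_A B → M ⊗_{A⟦u⟧} B⟦u⟧` exhibits `M ⊗_{A⟦u⟧} B⟦u⟧` as the `u`-adic completion of
`M ⊗_A B`:  `M ⊗_{A⟦u⟧} B⟦u⟧` is `u`-adically complete, and the natural map induces an
isomorphism `(M ⊗_A B)/u^n(M ⊗_A B) ≅ (M ⊗_{A⟦u⟧} B⟦u⟧)/u^n(M ⊗_{A⟦u⟧} B⟦u⟧)` for every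
`n` (equivalently, the induced `B⟦u⟧`-linear map
`lim_n (M ⊗_A B)/u^n(M ⊗_A B) → M ⊗_{A⟦u⟧} B⟦u⟧` is an isomorphism).  In particular, the
`u`-adic completion of `M ⊗_A B` is a finitely generated projective `B⟦u⟧`-module. -/
theorem statement_3
    (A : Type) [CommRing A]
    (M : Type) [AddCommGroup M] [Module (PowerSeries A) M]
    [Module.Finite (PowerSeries A) M] [Module.Projective (PowerSeries A) M]
    (B : Type) [CommRing B] [Algebra A B] :
    letI : Module A M := Module.compHom M (PowerSeries.C (R := A))
    letI : Algebra (PowerSeries A) (PowerSeries B) :=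
      (PowerSeries.map (algebraMap A B)).toAlgebra
    (Module.Finite (PowerSeries B) (TensorProduct (PowerSeries A) (PowerSeries B) M) ∧
      Module.Projective (PowerSeries B) (TensorProduct (PowerSeries A) (PowerSeries B) M)) ∧
    ∀ (g : TensorProduct A B M →+ TensorProduct (PowerSeries A) (PowerSeries B) M),
      (∀ (b : B) (m : M), g (b ⊗ₜ[A] m) = (PowerSeries.C (R := B) b) ⊗ₜ[PowerSeries A] m) →
      (IsAdicComplete (Ideal.span {(PowerSeries.X : PowerSeries B)})
          (TensorProduct (PowerSeries A) (PowerSeries B) M) ∧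
        ∀ (n : ℕ)
          (tb : (TensorProduct A B M ⧸
              AddSubgroup.closure {x : TensorProduct A B M |
                ∃ (b : B) (m : M), x = b ⊗ₜ[A] ((PowerSeries.X : PowerSeries A) ^ n • m)}) →+
            ((TensorProduct (PowerSeries A) (PowerSeries B) M) ⧸
              AddSubgroup.closure {y : TensorProduct (PowerSeries A) (PowerSeries B) M |
                ∃ z, y = (PowerSeries.X : PowerSeries B) ^ n • z})),
          (∀ x : TensorProduct A B M,
            tb (QuotientAddGroup.mk x) = QuotientAddGroup.mk (g x)) →
          Function.Bijective ⇑tb) := by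
  classical
  letI : Module A M := Module.compHom M (PowerSeries.C (R := A))
  letI : Algebra (PowerSeries A) (PowerSeries B) :=
    (PowerSeries.map (algebraMap A B)).toAlgebra
  refine ⟨⟨inferInstance, inferInstance⟩, ?_⟩
  intro g hg
  constructor
  · haveI := Statement3Aux.isAdicComplete_powerSeries B
    exact Statement3Aux.isAdicComplete_of_finite_projective _ _
  · intro n tb htb
    revert tb htb
    set K₁ : AddSubgroup (TensorProduct A B M) :=
      AddSubgroup.closure {x : TensorProduct A B M |
        ∃ (b : B) (m : M), x = b ⊗ₜ[A] ((PowerSeries.X : PowerSeries A) ^ n • m)} with hK₁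
    set K₂ : AddSubgroup (TensorProduct (PowerSeries A) (PowerSeries B) M) :=
      AddSubgroup.closure {y : TensorProduct (PowerSeries A) (PowerSeries B) M |
        ∃ z, y = (PowerSeries.X : PowerSeries B) ^ n • z} with hK₂
    intro tb htb
    let mk₁ : TensorProduct A B M →+ (TensorProduct A B M ⧸ K₁) := QuotientAddGroup.mk' K₁
    have hmk₁ : ∀ x, mk₁ x = QuotientAddGroup.mk x := fun _ => rfl
    -- elements b ⊗ (X^i • m) with i ≥ n die in the quotient
    have hzero : ∀ (b : B) (m : M) (i : ℕ), n ≤ i →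
        mk₁ (b ⊗ₜ[A] ((X : PowerSeries A) ^ i • m)) = 0 := by
      intro b m i hi
      rw [hmk₁, QuotientAddGroup.eq_zero_iff]
      apply AddSubgroup.subset_closure
      refine ⟨b, (X : PowerSeries A) ^ (i - n) • m, ?_⟩
      rw [← mul_smul, ← pow_add, Nat.add_sub_cancel' hi]
    have hA : ∀ (a : A) (m : M), a • m = (PowerSeries.C (R := A) a) • m := fun a m => rfl
    have hBtensor : ∀ (a : A) (b : B) (x : M),
        b ⊗ₜ[A] ((PowerSeries.C (R := A) a) • x) = (a • b) ⊗ₜ[A] x := by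
      intro a b x
      rw [← hA, TensorProduct.smul_tmul]
    -- the truncation map
    set F : PowerSeries B → M → (TensorProduct A B M ⧸ K₁) := fun f m =>
      mk₁ (∑ i ∈ Finset.range n, (coeff (R := B) i f) ⊗ₜ[A] ((X : PowerSeries A) ^ i • m)) with hF
    -- key rewriting lemma
    have hL1 : ∀ (s : PowerSeries A) (b : B) (m : M) (q : ℕ),
        mk₁ (b ⊗ₜ[A] (((X : PowerSeries A) ^ q * s) • m)) =
          ∑ p ∈ Finset.range n,
            mk₁ ((coeff (R := A) p s • b) ⊗ₜ[A] ((X : PowerSeries A) ^ (q + p) • m)) := by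
      intro s b m q
      obtain ⟨r, hr⟩ := Statement3Aux.exists_decomp n s
      have hsplit : (X : PowerSeries A) ^ q * s =
          (∑ p ∈ Finset.range n, (PowerSeries.C (R := A) (coeff (R := A) p s)) * (X ^ (q + p))) +
            X ^ n * (X ^ q * r) := by
        conv_lhs => rw [hr]
        rw [mul_add, Finset.mul_sum]
        congr 1
        · refine Finset.sum_congr rfl fun p _ => ?_
          rw [pow_add]; ring
        · ring
      rw [hsplit, add_smul, TensorProduct.tmul_add, map_add]
      have h2 : mk₁ (b ⊗ₜ[A] (((X : PowerSeries A) ^ n * (X ^ q * r)) • m)) = 0 := by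
        rw [mul_smul]
        rw [hmk₁, QuotientAddGroup.eq_zero_iff]
        exact AddSubgroup.subset_closure ⟨b, _, rfl⟩
      rw [h2, add_zero, Finset.sum_smul, TensorProduct.tmul_sum, map_sum]
      refine Finset.sum_congr rfl fun p _ => ?_
      rw [mul_smul, hBtensor]
    -- balancedness
    have hbal : ∀ (s : PowerSeries A) (f : PowerSeries B) (m : M), F (s • f) m = F f (s • m) := by
      intro s f m
      set Φ : ℕ × ℕ → (TensorProduct A B M ⧸ K₁) := fun pq =>
        mk₁ ((algebraMap A B (coeff (R := A) pq.1 s) * coeff (R := B) pq.2 f) ⊗ₜ[A]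
          ((X : PowerSeries A) ^ (pq.1 + pq.2) • m)) with hΦdef
      have hΦ0 : ∀ pq : ℕ × ℕ, n ≤ pq.1 + pq.2 → Φ pq = 0 := fun pq h => hzero _ _ _ h
      have hRHS : F f (s • m) = ∑ q ∈ Finset.range n, ∑ p ∈ Finset.range n, Φ (p, q) := by
        rw [hF]
        simp only
        rw [map_sum]
        refine Finset.sum_congr rfl fun q _ => ?_
        rw [← mul_smul]
        rw [hL1 s (coeff (R := B) q f) m q]
        refine Finset.sum_congr rfl fun p _ => ?_
        rw [hΦdef]
        simp only
        rw [Algebra.smul_def, add_comm q p]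
      have hLHS : F (s • f) m =
          ∑ i ∈ Finset.range n, ∑ pq ∈ Finset.HasAntidiagonal.antidiagonal i, Φ pq := by
        rw [hF]
        simp only
        rw [map_sum]
        refine Finset.sum_congr rfl fun i _ => ?_
        have hsf : s • f = PowerSeries.map (algebraMap A B) s * f := rfl
        rw [hsf, coeff_mul, TensorProduct.sum_tmul, map_sum]
        refine Finset.sum_congr rfl fun pq hpq => ?_
        rw [Finset.HasAntidiagonal.mem_antidiagonal] at hpq
        rw [hΦdef]
        simp only
        rw [coeff_map, hpq]
      rw [hRHS, hLHS]
      -- combinatorial triangle identity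
      have htri : ∑ i ∈ Finset.range n, ∑ pq ∈ Finset.HasAntidiagonal.antidiagonal i, Φ pq =
          ∑ pq ∈ Finset.range n ×ˢ Finset.range n, Φ pq := by
        rw [← Finset.sum_biUnion]
        · refine Finset.sum_subset ?_ ?_
          · intro pq hpq
            simp only [Finset.mem_biUnion, Finset.mem_range, Finset.HasAntidiagonal.mem_antidiagonal] at hpq
            obtain ⟨i, hi, hpqi⟩ := hpq
            simp only [Finset.mem_product, Finset.mem_range]
            omega
          · intro pq _ hnot
            refine hΦ0 pq ?_
            by_contra hlt
            push_neg at hlt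
            exact hnot (Finset.mem_biUnion.2 ⟨pq.1 + pq.2, Finset.mem_range.2 hlt,
              Finset.HasAntidiagonal.mem_antidiagonal.2 rfl⟩)
        · intro i _ j _ hij
          refine Finset.disjoint_left.2 fun pq h1 h2 => hij ?_
          rw [Finset.HasAntidiagonal.mem_antidiagonal] at h1 h2
          rw [← h1, ← h2]
      rw [htri, Finset.sum_product]
      exact (Finset.sum_comm)
    -- package F as a bi-additive map and lift to the tensor product
    have hFadd_m : ∀ (f : PowerSeries B) (m m' : M), F f (m + m') = F f m + F f m' := by
      intro f m m'
      rw [hF]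
      simp only [smul_add, TensorProduct.tmul_add, Finset.sum_add_distrib, map_add]
    have hFadd_f : ∀ (f f' : PowerSeries B) (m : M), F (f + f') m = F f m + F f' m := by
      intro f f' m
      rw [hF]
      simp only [map_add, TensorProduct.add_tmul, Finset.sum_add_distrib]
    set ψ₀ : PowerSeries B →+ M →+ (TensorProduct A B M ⧸ K₁) :=
      AddMonoidHom.mk' (fun f => AddMonoidHom.mk' (F f) (hFadd_m f))
        (fun f f' => AddMonoidHom.ext fun m => hFadd_f f f' m) with hψ₀
    set ψ : TensorProduct (PowerSeries A) (PowerSeries B) M →+ (TensorProduct A B M ⧸ K₁) :=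
      TensorProduct.liftAddHom ψ₀ (fun s f m => hbal s f m) with hψdef
    have hψ_tmul : ∀ (f : PowerSeries B) (m : M), ψ (f ⊗ₜ[PowerSeries A] m) = F f m :=
      fun f m => TensorProduct.liftAddHom_tmul ψ₀ (fun s f m => hbal s f m) f m
    have hψK₂ : ∀ y ∈ K₂, ψ y = 0 := by
      have hle : K₂ ≤ ψ.ker := by
        rw [hK₂, AddSubgroup.closure_le]
        rintro y ⟨z, rfl⟩
        rw [SetLike.mem_coe, AddMonoidHom.mem_ker]
        induction z using TensorProduct.induction_on with
        | zero => rw [smul_zero, map_zero]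
        | tmul f m =>
          rw [TensorProduct.smul_tmul', smul_eq_mul, hψ_tmul, hF]
          simp only
          have hc : ∀ i < n, coeff (R := B) i ((X : PowerSeries B) ^ n * f) = 0 :=
            X_pow_dvd_iff.1 (dvd_mul_right _ f)
          rw [← map_zero mk₁]
          congr 1
          refine Finset.sum_eq_zero fun i hi => ?_
          rw [hc i (Finset.mem_range.1 hi), TensorProduct.zero_tmul]
        | add z₁ z₂ h₁ h₂ =>
          rw [smul_add, map_add, h₁, h₂, add_zero]
      exact fun y hy => hle hy
    set ψbar : (TensorProduct (PowerSeries A) (PowerSeries B) M ⧸ K₂) →+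
        (TensorProduct A B M ⧸ K₁) := QuotientAddGroup.lift K₂ ψ hψK₂ with hψbar
    have hψbar_mk : ∀ z, ψbar (QuotientAddGroup.mk z) = ψ z := fun _ => rfl
    have hterm : ∀ (c : B) (i : ℕ) (m : M),
        (PowerSeries.C (R := B) c) ⊗ₜ[PowerSeries A] ((X : PowerSeries A) ^ i • m) =
          ((X : PowerSeries B) ^ i * PowerSeries.C (R := B) c) ⊗ₜ[PowerSeries A] m := by
      intro c i m
      have h1 : ((X : PowerSeries A) ^ i) • (PowerSeries.C (R := B) c) =
          (X : PowerSeries B) ^ i * PowerSeries.C (R := B) c := by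
        rw [Algebra.smul_def]
        congr 1
        show PowerSeries.map (algebraMap A B) (X ^ i) = X ^ i
        rw [map_pow, PowerSeries.map_X]
      rw [← TensorProduct.smul_tmul, h1]
    -- tb ∘ ψbar = id
    have hright : ∀ yq, tb (ψbar yq) = yq := by
      intro yq
      refine QuotientAddGroup.induction_on yq fun z => ?_
      rw [hψbar_mk]
      induction z using TensorProduct.induction_on with
      | zero => simp
      | tmul f m =>
        rw [hψ_tmul, hF]
        simp only
        rw [hmk₁, htb]
        obtain ⟨r, hr⟩ := Statement3Aux.exists_decomp n f
        have hgx : g (∑ i ∈ Finset.range n, (coeff (R := B) i f) ⊗ₜ[A] ((X : PowerSeries A) ^ i • m)) =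
            f ⊗ₜ[PowerSeries A] m - (X : PowerSeries B) ^ n • (r ⊗ₜ[PowerSeries A] m) := by
          rw [map_sum]
          have hgi : ∀ i ∈ Finset.range n,
              g ((coeff (R := B) i f) ⊗ₜ[A] ((X : PowerSeries A) ^ i • m)) =
                ((X : PowerSeries B) ^ i * PowerSeries.C (R := B) (coeff (R := B) i f))
                  ⊗ₜ[PowerSeries A] m := by
            intro i _
            rw [hg, hterm]
          rw [Finset.sum_congr rfl hgi, eq_sub_iff_add_eq]
          rw [TensorProduct.smul_tmul', smul_eq_mul, ← TensorProduct.sum_tmul,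
            ← TensorProduct.add_tmul]
          congr 1
          conv_rhs => rw [hr]
          congr 1
          exact Finset.sum_congr rfl fun i _ => mul_comm _ _
        rw [hgx, QuotientAddGroup.mk_sub]
        have hz : (QuotientAddGroup.mk ((X : PowerSeries B) ^ n • (r ⊗ₜ[PowerSeries A] m)) :
            TensorProduct (PowerSeries A) (PowerSeries B) M ⧸ K₂) = 0 :=
          (QuotientAddGroup.eq_zero_iff _).2 (AddSubgroup.subset_closure ⟨_, rfl⟩)
        rw [hz, sub_zero]
      | add z₁ z₂ h₁ h₂ =>
        rw [map_add, map_add, h₁, h₂, ← QuotientAddGroup.mk_add]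
    -- ψbar ∘ tb = id
    have hleft : ∀ xq, ψbar (tb xq) = xq := by
      intro xq
      refine QuotientAddGroup.induction_on xq fun x => ?_
      rw [htb x]
      induction x using TensorProduct.induction_on with
      | zero => simp
      | tmul b m =>
        rw [hg, hψbar_mk, hψ_tmul, hF]
        simp only
        rcases Nat.eq_zero_or_pos n with hn | hn
        · subst hn
          rw [Finset.range_zero, Finset.sum_empty, map_zero]
          symm
          rw [QuotientAddGroup.eq_zero_iff]
          exact AddSubgroup.subset_closure ⟨b, m, by rw [pow_zero, one_smul]⟩
        · rw [Finset.sum_eq_single_of_mem 0 (Finset.mem_range.2 hn)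
            (fun i _ hi => by rw [PowerSeries.coeff_C, if_neg hi, TensorProduct.zero_tmul])]
          rw [PowerSeries.coeff_zero_C, pow_zero, one_smul, hmk₁]
      | add x y hx hy =>
        rw [map_add, QuotientAddGroup.mk_add, map_add, hx, hy, ← QuotientAddGroup.mk_add]
    exact Function.bijective_iff_has_inverse.2 ⟨ψbar, fun x => hleft x, fun y => hright y⟩
end
end

section
/- Let a ≥ 1 and let A be a Z_p-algebra with p^a = 0. Let E(u) ∈ W(k')[u] be an Eisenstein polynomial of degree e, let M be a Breuil–Kisin module with A-coefficients of height at most h, and let N be a u-adically complete, u-torsion free S_A-module equipped with an S_A-linear map Φ_N : φ*N → N. Set C^0 := Hom_{S_A}(M, N) and C^1 := Hom_{S_A}(φ*M, N), define δ : C^0 → C^1 by δ(α) := Φ_N ∘ φ*α − α ∘ Φ_M, and Φ* : C^0 → C^1 by Φ*(α) := α ∘ Φ_M. Let Q be an A-module such that C^0 ⊗_A Q and C^1 ⊗_A Q are u-torsion free and C^0 ⊗_A Q is u-adically separated. Then: (1) for every integer M₀ ≥ (eah+1)/(p−1), one has ker(δ ⊗ id_Q) ∩ u^{M₀}(C^0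 ⊗_A Q) = 0; (2) for every integer N₀ ≥ (peah+1)/(p−1), the map δ ⊗ id_Q restricts to a bijection from {x ∈ C^0 ⊗_A Q : (Φ* ⊗ id_Q)(x) ∈ u^{N₀}(C^1 ⊗_A Q)} onto u^{N₀}(C^1 ⊗_A Q). -/
open scoped TensorProduct
open PowerSeries

noncomputable section

variable (p : ℕ) [Fact p.Prime]
variable (k' : Type) [Field k'] [Fintype k'] [CharP k' p]

variable (A : Type) [CommRing A] [Algebra ℤ_[p] A]

namespace St6Aux
set_option linter.unusedSectionVars false

variable {p : ℕ} [Fact p.Prime] {k' : Type} [Field k'] [Fintype k'] [CharP k' p]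
variable {A : Type} [CommRing A] [Algebra ℤ_[p] A]

lemma phiS_X {σ : WW p k' A →+* WW p k' A} {φS : SS p k' A →+* SS p k' A}
    (hφ : IsFrobeniusLift p k' A σ φS) :
    φS (X : SS p k' A) = X ^ p := by
  have hp : p.Prime := Fact.out
  ext n
  rw [hφ.2.2 X n, coeff_X_pow]
  by_cases hdvd : p ∣ n
  · rw [if_pos hdvd, coeff_X]
    by_cases hn : n = p
    · subst hn
      rw [if_pos (Nat.div_self hp.pos), if_pos rfl, map_one]
    · have h1 : ¬ n / p = 1 := by
        intro h1
        apply hn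
        rw [← Nat.div_mul_cancel hdvd, h1, one_mul]
      rw [if_neg h1, map_zero, if_neg hn]
  · rw [if_neg hdvd, if_neg]
    rintro rfl
    exact hdvd dvd_rfl

lemma AtoSS_apply (r : A) :
    AtoSS p k' A r = PowerSeries.C (R := WW p k' A) ((1 : WittVector p k') ⊗ₜ[ℤ_[p]] r) := rfl

lemma phiS_AtoSS {σ : WW p k' A →+* WW p k' A} {φS : SS p k' A →+* SS p k' A}
    (hφ : IsFrobeniusLift p k' A σ φS) (r : A) :
    φS (AtoSS p k' A r) = AtoSS p k' A r := by
  have hp : p.Prime := Fact.out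
  rw [AtoSS_apply]
  ext n
  rw [hφ.2.2 _ n]
  by_cases hn : n = 0
  · subst hn
    rw [if_pos (dvd_zero p), Nat.zero_div, coeff_zero_C]
    exact hφ.2.1 r
  · by_cases hdvd : p ∣ n
    · have hnp : ¬ n / p = 0 := by
        intro h0
        apply hn
        have h2 := Nat.div_mul_cancel hdvd
        rw [h0, zero_mul] at h2
        omega
      rw [if_pos hdvd, coeff_C, if_neg hnp, map_zero, coeff_C, if_neg hn]
    · rw [if_neg hdvd, coeff_C, if_neg hn]

lemma p_pow_zero {a : ℕ} (ha : (p : A) ^ a = 0) : ((p : ℕ) : WW p k' A) ^ a = 0 := by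
  have h1 : ((p : ℕ) : WW p k' A)
      = (Algebra.TensorProduct.includeRight : A →ₐ[ℤ_[p]] WW p k' A) ((p : ℕ) : A) := by
    rw [map_natCast]
  rw [h1, ← map_pow, ha, map_zero]

lemma exists_decomp {a e : ℕ} {E : Polynomial (WittVector p k')}
    (ha : (p : A) ^ a = 0) (hE : IsEisenstein p k' e E) :
    ∃ ν : SS p k' A, polyToSS p k' A E = X ^ e + ν ∧ ν ^ a = 0 := by
  obtain ⟨hmon, hdeg, he1, hcoef, -⟩ := hE
  choose c hc using fun i (hi : i < e) => (Ideal.mem_span_singleton.mp (hcoef i hi))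
  refine ⟨PowerSeries.C (R := WW p k' A) ((p : ℕ) : WW p k' A) *
      PowerSeries.mk (fun n => if h : n < e then (c n h) ⊗ₜ[ℤ_[p]] (1 : A) else 0), ?_, ?_⟩
  · ext n
    rw [polyToSS, coeff_mk, map_add, coeff_X_pow, coeff_C_mul, coeff_mk]
    rcases lt_trichotomy n e with hlt | heq | hgt
    · rw [dif_pos hlt, if_neg (by omega), zero_add, hc n hlt]
      have hcast : ((p : ℕ) : WW p k' A) = ((p : ℕ) : WittVector p k') ⊗ₜ[ℤ_[p]] (1 : A) := by
        rw [← Algebra.TensorProduct.includeLeft_apply (R := ℤ_[p]) (S := ℤ_[p]), map_natCast]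
      rw [hcast, Algebra.TensorProduct.tmul_mul_tmul, one_mul]
    · subst heq
      rw [dif_neg (by omega), if_pos rfl, mul_zero, add_zero]
      have : E.coeff n = 1 := by
        have := hmon.coeff_natDegree
        rwa [hdeg] at this
      rw [this, Algebra.TensorProduct.one_def]
    · rw [dif_neg (by omega), if_neg (by omega), mul_zero, add_zero]
      rw [Polynomial.coeff_eq_zero_of_natDegree_lt (by omega), TensorProduct.zero_tmul]
  · rw [mul_pow, ← map_pow, p_pow_zero ha, map_zero, zero_mul]

lemma smul_reg_pow {R T : Type} [CommRing R] [AddCommGroup T] [Module R T] (F : R)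
    (hF : ∀ x : T, F • x = 0 → x = 0) : ∀ (n : ℕ) (x : T), F ^ n • x = 0 → x = 0 := by
  intro n
  induction n with
  | zero => intro x hx; simpa using hx
  | succ n ih =>
    intro x hx
    refine hF x (ih (F • x) ?_)
    rw [← mul_smul, ← pow_succ]
    exact hx

lemma nzd_aux {T : Type} [AddCommGroup T] [Module (SS p k' A) T]
    (hX : ∀ x : T, (X : SS p k' A) • x = 0 → x = 0)
    (F ν : SS p k' A) (e a : ℕ) (hF : F = X ^ e + ν) (hν : ν ^ a = 0) :
    ∀ x : T, F • x = 0 → x = 0 := by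
  intro x hx
  have hXe : (X : SS p k' A) ^ e • x = (-ν) • x := by
    have h1 : F • x = (X : SS p k' A) ^ e • x + ν • x := by rw [hF, add_smul]
    rw [hx] at h1
    have := h1.symm
    rw [← eq_sub_iff_add_eq] at this
    rw [this, zero_sub, neg_smul]
  have key : ∀ j, ((X : SS p k' A) ^ e) ^ j • x = ((-ν) ^ j) • x := by
    intro j
    induction j with
    | zero => simp
    | succ j ih =>
      rw [pow_succ, mul_smul, hXe, smul_comm, ih, smul_smul, ← pow_succ']
  have h0 : ((X : SS p k' A) ^ (e * a)) • x = 0 := by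
    have hnp : (-ν) ^ a = (-1 : SS p k' A) ^ a * ν ^ a := neg_pow _ _
    rw [pow_mul, key a, hnp, hν, mul_zero, zero_smul]
  exact smul_reg_pow (X : SS p k' A) hX (e * a) x h0

lemma exists_c {e a : ℕ} (F ν : SS p k' A) (hF : F = X ^ e + ν) (hν : ν ^ a = 0) :
    ∃ c : SS p k' A, (X : SS p k' A) ^ (e * a) = F * c := by
  have hmem : (X : SS p k' A) ^ (e * a) ∈ Ideal.span {F} := by
    rw [← Ideal.Quotient.eq_zero_iff_mem]
    have hXe : (X : SS p k' A) ^ e = F - ν := by rw [hF]; ring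
    have hnp : (-(Ideal.Quotient.mk (Ideal.span {F})) ν) ^ a
        = (-1) ^ a * ((Ideal.Quotient.mk (Ideal.span {F})) ν) ^ a := by ring
    rw [pow_mul, map_pow, hXe, map_sub,
      Ideal.Quotient.eq_zero_iff_mem.mpr (Ideal.mem_span_singleton_self F), zero_sub,
      hnp, ← map_pow, hν, map_zero, mul_zero]
  obtain ⟨c, hc⟩ := Ideal.mem_span_singleton.mp hmem
  exact ⟨c, hc⟩

section Nlimits

variable {N : Type} [AddCommGroup N] [Module (SS p k' A) N]

variable (p k' A) in
def IsXpow (K : ℕ) (y : N) : Prop := ∃ n : N, y = (X : SS p k' A) ^ K • n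

lemma IsXpow.add {K : ℕ} {y1 y2 : N} (h1 : IsXpow p k' A K y1) (h2 : IsXpow p k' A K y2) :
    IsXpow p k' A K (y1 + y2) := by
  obtain ⟨n1, rfl⟩ := h1; obtain ⟨n2, rfl⟩ := h2
  exact ⟨n1 + n2, (smul_add _ _ _).symm⟩

lemma IsXpow.neg {K : ℕ} {y : N} (h : IsXpow p k' A K y) : IsXpow p k' A K (-y) := by
  obtain ⟨n, rfl⟩ := h; exact ⟨-n, (smul_neg _ _).symm⟩

lemma IsXpow.sub {K : ℕ} {y1 y2 : N} (h1 : IsXpow p k' A K y1) (h2 : IsXpow p k' A K y2) :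
    IsXpow p k' A K (y1 - y2) := by
  rw [sub_eq_add_neg]; exact h1.add h2.neg

lemma IsXpow.mono {j K : ℕ} {y : N} (hjK : j ≤ K) (h : IsXpow p k' A K y) :
    IsXpow p k' A j y := by
  obtain ⟨n, rfl⟩ := h
  exact ⟨(X : SS p k' A) ^ (K - j) • n, by rw [← mul_smul, ← pow_add, Nat.add_sub_cancel' hjK]⟩

lemma IsXpow.smul {K : ℕ} {y : N} (s : SS p k' A) (h : IsXpow p k' A K y) :
    IsXpow p k' A K (s • y) := by
  obtain ⟨n, rfl⟩ := h; exact ⟨s • n, smul_comm _ _ _⟩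

lemma IsXpow.zero {K : ℕ} : IsXpow p k' A K (0 : N) := ⟨0, (smul_zero _).symm⟩

lemma IsXpow.ofZero (y : N) : IsXpow p k' A 0 y := ⟨y, by simp⟩

lemma IsXpow.map {K : ℕ} {y : N} {φS : SS p k' A →+* SS p k' A}
    (hφX : φS (X : SS p k' A) = X ^ p) (ΦN : N →ₛₗ[φS] N) (h : IsXpow p k' A K y) :
    IsXpow p k' A K (ΦN y) := by
  obtain ⟨n, rfl⟩ := h
  have hp : p.Prime := Fact.out
  refine IsXpow.mono (Nat.le_mul_of_pos_left K hp.pos) ⟨ΦN n, ?_⟩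
  rw [LinearMap.map_smulₛₗ, map_pow, hφX, ← pow_mul]

lemma isXpow_iff_mem {K : ℕ} {y : N} :
    y ∈ (Ideal.span {(X : SS p k' A)} ^ K • ⊤ : Submodule (SS p k' A) N)
      ↔ IsXpow p k' A K y := by
  rw [Ideal.span_singleton_pow]
  constructor
  · intro hy
    refine Submodule.smul_induction_on hy ?_ ?_
    · rintro r hr n -
      obtain ⟨t, rfl⟩ := Ideal.mem_span_singleton.mp hr
      exact ⟨t • n, by rw [mul_smul]⟩
    · rintro x y ⟨nx, rfl⟩ ⟨ny, rfl⟩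
      exact ⟨nx + ny, (smul_add _ _ _).symm⟩
  · rintro ⟨n, rfl⟩
    exact Submodule.smul_mem_smul (Ideal.mem_span_singleton_self _) Submodule.mem_top

lemma eq_zero_of_forall_isXpow (hNcomp : IsAdicComplete (Ideal.span {(X : SS p k' A)}) N)
    (y : N) (h : ∀ K, IsXpow p k' A K y) : y = 0 :=
  hNcomp.toIsHausdorff.haus y fun K =>
    SModEq.sub_mem.mpr (by rw [sub_zero]; exact isXpow_iff_mem.mpr (h K))

lemma exists_lim (hNcomp : IsAdicComplete (Ideal.span {(X : SS p k' A)}) N)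
    (g : ℕ → N) (hg : ∀ k, IsXpow p k' A k (g k)) :
    ∃ L : N, ∀ K, IsXpow p k' A K (L - ∑ k ∈ Finset.range K, g k) := by
  have hcau : ∀ {m n : ℕ}, m ≤ n →
      (∑ k ∈ Finset.range m, g k) ≡ (∑ k ∈ Finset.range n, g k)
        [SMOD (Ideal.span {(X : SS p k' A)} ^ m • ⊤ : Submodule (SS p k' A) N)] := by
    intro m n hmn
    rw [SModEq.sub_mem]
    have hsub : (∑ k ∈ Finset.range m, g k) - (∑ k ∈ Finset.range n, g k)
        = -∑ k ∈ Finset.Ico m n, g k := by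
      rw [Finset.sum_Ico_eq_sub _ hmn]
      abel
    rw [hsub]
    refine Submodule.neg_mem _ (Submodule.sum_mem _ ?_)
    intro k hk
    refine isXpow_iff_mem.mpr (IsXpow.mono ?_ (hg k))
    exact (Finset.mem_Ico.mp hk).1
  obtain ⟨L, hL⟩ := hNcomp.toIsPrecomplete.prec
    (f := fun K => ∑ k ∈ Finset.range K, g k) hcau
  refine ⟨L, fun K => ?_⟩
  have h1 := SModEq.sub_mem.mp (hL K)
  have h2 := isXpow_iff_mem.mp h1
  have h3 := h2.neg
  rwa [neg_sub] at h3

variable (p k' A) in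
def limOf (hNcomp : IsAdicComplete (Ideal.span {(X : SS p k' A)}) N)
    (g : ℕ → N) (hg : ∀ k, IsXpow p k' A k (g k)) : N :=
  (exists_lim hNcomp g hg).choose

lemma limOf_spec (hNcomp : IsAdicComplete (Ideal.span {(X : SS p k' A)}) N)
    (g : ℕ → N) (hg : ∀ k, IsXpow p k' A k (g k)) :
    ∀ K, IsXpow p k' A K (limOf p k' A hNcomp g hg - ∑ k ∈ Finset.range K, g k) :=
  (exists_lim hNcomp g hg).choose_spec

lemma limOf_unique (hNcomp : IsAdicComplete (Ideal.span {(X : SS p k' A)}) N)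
    (g : ℕ → N) (hg : ∀ k, IsXpow p k' A k (g k)) (L : N)
    (hL : ∀ K, IsXpow p k' A K (L - ∑ k ∈ Finset.range K, g k)) :
    L = limOf p k' A hNcomp g hg := by
  have h0 : ∀ K, IsXpow p k' A K (L - limOf p k' A hNcomp g hg) := by
    intro K
    have := (hL K).sub (limOf_spec hNcomp g hg K)
    rwa [sub_sub_sub_cancel_right] at this
  have := eq_zero_of_forall_isXpow hNcomp _ h0
  rwa [sub_eq_zero] at this

end Nlimits

end St6Aux

open St6Aux in
set_option maxHeartbeats 1600000 in

/-- the key truncation lemma, in the case of trivial descent data.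
Here `C⁰ = Hom_{𝔖_A}(M, N)` and `C¹ = Hom_{𝔖_A}(φ*M, N)`, the latter identified with the
module of `φ`-semilinear maps `M → N`; `δ(α) = Φ_N ∘ φ*α − α ∘ Φ_M` and `Φ*(α) = α ∘ Φ_M`;
`u0`, `u1` are multiplication by `u` on `C⁰`, `C¹`, so that `u^k(Cⁱ ⊗_A Q)` is the range of
the `k`-th power of `rTensor Q uᵢ`. -/
theorem statement_6
    (σ : WW p k' A →+* WW p k' A) (φS : SS p k' A →+* SS p k' A)
    (hφ : IsFrobeniusLift p k' A σ φS)
    (a : ℕ) (ha1 : 1 ≤ a) (ha : (p : A) ^ a = 0)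
    (e : ℕ) (E : Polynomial (WittVector p k')) (hE : IsEisenstein p k' e E)
    (h : ℕ)
    (M : Type) [AddCommGroup M] [Module (SS p k' A) M]
    [Module.Finite (SS p k' A) M] [Module.Projective (SS p k' A) M]
    (Φ : M →ₛₗ[φS] M)
    (hMiso : LinearizationBijectiveAfterInverting φS (polyToSS p k' A E) Φ)
    (hMht : ∀ x : M, polyToSS p k' A E ^ h • x ∈ Submodule.span (SS p k' A) (Set.range ⇑Φ))
    (N : Type) [AddCommGroup N] [Module (SS p k' A) N]
    (hNcomp : IsAdicComplete (Ideal.span {(PowerSeries.X : SS p k' A)}) N)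
    (hNtf : ∀ x : N, (PowerSeries.X : SS p k' A) • x = 0 → x = 0)
    (ΦN : N →ₛₗ[φS] N)
    (Q : Type) [AddCommGroup Q] [Module A Q] :
    letI : Module A (M →ₗ[SS p k' A] N) :=
      Module.compHom (M →ₗ[SS p k' A] N) (AtoSS p k' A)
    letI : Module A (M →ₛₗ[φS] N) :=
      Module.compHom (M →ₛₗ[φS] N) (AtoSS p k' A)
    ∀ (δ : (M →ₗ[SS p k' A] N) →ₗ[A] (M →ₛₗ[φS] N)),
      (∀ (α : M →ₗ[SS p k' A] N) (m : M), δ α m = ΦN (α m) - α (Φ m)) →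
      ∀ (Φstar : (M →ₗ[SS p k' A] N) →ₗ[A] (M →ₛₗ[φS] N)),
        (∀ (α : M →ₗ[SS p k' A] N) (m : M), Φstar α m = α (Φ m)) →
        ∀ (u0 : (M →ₗ[SS p k' A] N) →ₗ[A] (M →ₗ[SS p k' A] N)),
          (∀ α, u0 α = (PowerSeries.X : SS p k' A) • α) →
          ∀ (u1 : (M →ₛₗ[φS] N) →ₗ[A] (M →ₛₗ[φS] N)),
            (∀ β, u1 β = (PowerSeries.X : SS p k' A) • β) →
            -- `C⁰ ⊗_A Q` and `C¹ ⊗_A Q` are `u`-torsion free: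
            (∀ z : TensorProduct A (M →ₗ[SS p k' A] N) Q,
              LinearMap.rTensor Q u0 z = 0 → z = 0) →
            (∀ z : TensorProduct A (M →ₛₗ[φS] N) Q,
              LinearMap.rTensor Q u1 z = 0 → z = 0) →
            -- `C⁰ ⊗_A Q` is `u`-adically separated:
            ((⨅ n : ℕ, LinearMap.range
              ((LinearMap.rTensor Q u0 :
                Module.End A (TensorProduct A (M →ₗ[SS p k' A] N) Q)) ^ n)) = ⊥) →
            ((∀ M₀ : ℕ, e * a * h + 1 ≤ (p - 1) * M₀ →
                ∀ z : TensorProduct A (M →ₗ[SS p k' A] N) Q,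
                  LinearMap.rTensor Q δ z = 0 →
                  z ∈ LinearMap.range
                    ((LinearMap.rTensor Q u0 :
                      Module.End A (TensorProduct A (M →ₗ[SS p k' A] N) Q)) ^ M₀) →
                  z = 0) ∧
              (∀ N₀ : ℕ, p * e * a * h + 1 ≤ (p - 1) * N₀ →
                Set.BijOn (⇑(LinearMap.rTensor Q δ))
                  {x : TensorProduct A (M →ₗ[SS p k' A] N) Q |
                    LinearMap.rTensor Q Φstar x ∈ LinearMap.range
                      ((LinearMap.rTensor Q u1 :
                        Module.End A (TensorProduct A (M →ₛₗ[φS] N) Q)) ^ N₀)}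
                  ↑(LinearMap.range
                    ((LinearMap.rTensor Q u1 :
                      Module.End A (TensorProduct A (M →ₛₗ[φS] N) Q)) ^ N₀)))) := by
  classical
  have hp : p.Prime := Fact.out
  have hp2 : 2 ≤ p := hp.two_le
  letI instC0 : Module A (M →ₗ[SS p k' A] N) :=
    Module.compHom (M →ₗ[SS p k' A] N) (AtoSS p k' A)
  letI instC1 : Module A (M →ₛₗ[φS] N) :=
    Module.compHom (M →ₛₗ[φS] N) (AtoSS p k' A)
  intro δ hδ Φstar hΦstar u0 hu0 u1 hu1 htf0 htf1 hsep
  -- basic S-level facts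
  have hφX : φS (X : SS p k' A) = X ^ p := phiS_X hφ
  have hφA : ∀ r : A, φS (AtoSS p k' A r) = AtoSS p k' A r := phiS_AtoSS hφ
  obtain ⟨ν, hν1, hν2⟩ := exists_decomp (a := a) (e := e) ha hE
  obtain ⟨c, hc⟩ := exists_c (a := a) (polyToSS p k' A E) ν hν1 hν2
  have hXc : (X : SS p k' A) ^ (e * a * h) = polyToSS p k' A E ^ h * c ^ h := by
    rw [pow_mul, hc, mul_pow]
  have hNE : ∀ x : N, polyToSS p k' A E • x = 0 → x = 0 :=
    nzd_aux hNtf _ ν e a hν1 hν2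
  have hNEn : ∀ (n : ℕ) (x : N), polyToSS p k' A E ^ n • x = 0 → x = 0 :=
    smul_reg_pow _ hNE
  -- the base change P
  obtain ⟨P, iP1, iP2, ι, Φlin, hBC, hΦlinι, hLocBij⟩ := hMiso
  -- ψ : division of E^h by Φlin
  have hrange : ∀ x : M, polyToSS p k' A E ^ h • x ∈ LinearMap.range Φlin := by
    intro x
    refine Submodule.span_le.mpr ?_ (hMht x)
    rintro _ ⟨m, rfl⟩
    exact ⟨ι m, hΦlinι m⟩
  obtain ⟨ψ, hψ0⟩ := Module.projective_lifting_property (R := SS p k' A)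
    (Φlin.rangeRestrict)
    (LinearMap.codRestrict (LinearMap.range Φlin)
      (polyToSS p k' A E ^ h • LinearMap.id) hrange)
    (LinearMap.surjective_rangeRestrict Φlin)
  have hψ : ∀ x : M, Φlin (ψ x) = polyToSS p k' A E ^ h • x := by
    intro x
    have h1 := LinearMap.ext_iff.mp hψ0 x
    have h2 := congrArg Subtype.val h1
    simpa using h2
  -- pointwise E-power torsion of ψ ∘ Φlin - E^h on ι(M)
  have htors : ∀ m : M, ∃ n : ℕ,
      polyToSS p k' A E ^ n • (ψ (Φ m) - polyToSS p k' A E ^ h • ι m) = 0 := by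
    intro m
    have hz : Φlin (ψ (Φ m) - polyToSS p k' A E ^ h • ι m) = 0 := by
      rw [map_sub, hψ, map_smul, hΦlinι, sub_self]
    have h1 : (LocalizedModule.map (Submonoid.powers (polyToSS p k' A E)) Φlin)
        (LocalizedModule.mk (ψ (Φ m) - polyToSS p k' A E ^ h • ι m) 1) = 0 := by
      rw [LocalizedModule.map_mk, hz, LocalizedModule.zero_mk]
    have h2 : LocalizedModule.mk (ψ (Φ m) - polyToSS p k' A E ^ h • ι m)
        (1 : Submonoid.powers (polyToSS p k' A E)) = 0 := by
      apply hLocBij.1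
      rw [h1, map_zero]
    rw [show (0 : LocalizedModule (Submonoid.powers (polyToSS p k' A E)) P)
        = LocalizedModule.mk 0 1 from (LocalizedModule.zero_mk 1).symm] at h2
    obtain ⟨u, hu⟩ := LocalizedModule.mk_eq.mp h2
    obtain ⟨n, hn⟩ := (Submonoid.mem_powers_iff _ _).mp u.2
    refine ⟨n, ?_⟩
    have h3 : (u : SS p k' A) • (ψ (Φ m) - polyToSS p k' A E ^ h • ι m) = 0 := by
      have h4 := hu
      rw [one_smul, one_smul, smul_zero, Submonoid.smul_def] at h4
      exact h4
    rw [hn]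
    exact h3
  -- linearization of semilinear maps via the universal property
  have hLin := fun (β : M →ₛₗ[φS] N) => hBC N inferInstance inferInstance β
  set Lin : (M →ₛₗ[φS] N) → (P →ₗ[SS p k' A] N) := fun β => (hLin β).choose with hLindef
  have hLin1 : ∀ β m, Lin β (ι m) = β m := fun β => (hLin β).choose_spec.1
  have hLin2 : ∀ (β) (g : P →ₗ[SS p k' A] N), (∀ m, g (ι m) = β m) → g = Lin β :=
    fun β g hg => (hLin β).choose_spec.2 g hg
  have hLinadd : ∀ β1 β2, Lin (β1 + β2) = Lin β1 + Lin β2 :=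
    fun β1 β2 => (hLin2 _ _ (fun m => by
      rw [LinearMap.add_apply, hLin1, hLin1, LinearMap.add_apply])).symm
  have hLinsmul : ∀ (s : SS p k' A) β, Lin (s • β) = s • Lin β :=
    fun s β => (hLin2 _ _ (fun m => by
      rw [LinearMap.smul_apply, hLin1, LinearMap.smul_apply])).symm
  -- the A-module structure is via AtoSS
  have hsm0 : ∀ (r : A) (α : M →ₗ[SS p k' A] N), r • α = AtoSS p k' A r • α :=
    fun _ _ => rfl
  have hsm1 : ∀ (r : A) (β : M →ₛₗ[φS] N), r • β = AtoSS p k' A r • β :=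
    fun _ _ => rfl
  -- T : C⁰ → C¹, α ↦ ΦN ∘ α
  let T : (M →ₗ[SS p k' A] N) →ₗ[A] (M →ₛₗ[φS] N) :=
    { toFun := fun α => ΦN.comp α
      map_add' := fun α1 α2 => by
        ext m
        simp [LinearMap.add_apply, map_add]
      map_smul' := fun r α => by
        rw [RingHom.id_apply, hsm0, hsm1]
        ext m
        rw [LinearMap.comp_apply, LinearMap.smul_apply, LinearMap.smul_apply,
          LinearMap.map_smulₛₗ, hφA, LinearMap.comp_apply] }
  have hTapp : ∀ (α : M →ₗ[SS p k' A] N) (m : M), T α m = ΦN (α m) := fun α m => rfl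
  have hTsmul : ∀ (s : SS p k' A) (α : M →ₗ[SS p k' A] N), T (s • α) = φS s • T α := by
    intro s α
    ext m
    rw [hTapp, LinearMap.smul_apply, LinearMap.smul_apply, LinearMap.map_smulₛₗ, hTapp]
  -- V : C¹ → C⁰, β ↦ Lin β ∘ ψ
  let V : (M →ₛₗ[φS] N) →ₗ[A] (M →ₗ[SS p k' A] N) :=
    { toFun := fun β => (Lin β).comp ψ
      map_add' := fun β1 β2 => by rw [hLinadd, LinearMap.add_comp]
      map_smul' := fun r β => by
        rw [RingHom.id_apply, hsm1, hLinsmul, LinearMap.smul_comp, hsm0]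
    }
  have hVapp : ∀ (β : M →ₛₗ[φS] N) (x : M), V β x = Lin β (ψ x) := fun β x => rfl
  have hVsmul : ∀ (s : SS p k' A) (β : M →ₛₗ[φS] N), V (s • β) = s • V β := by
    intro s β
    show (Lin (s • β)).comp ψ = s • ((Lin β).comp ψ)
    rw [hLinsmul, LinearMap.smul_comp]
  -- W : C¹ → C⁰, β ↦ c^h • V β
  let W : (M →ₛₗ[φS] N) →ₗ[A] (M →ₗ[SS p k' A] N) :=
    { toFun := fun β => c ^ h • V β
      map_add' := fun β1 β2 => by rw [map_add, smul_add]
      map_smul' := fun r β => by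
        rw [RingHom.id_apply, map_smul, hsm0 r (V β), hsm0 r (c ^ h • V β), smul_comm] }
  have hWapp : ∀ β, W β = c ^ h • V β := fun β => rfl
  have hWsmul : ∀ (s : SS p k' A) (β : M →ₛₗ[φS] N), W (s • β) = s • W β := by
    intro s β
    rw [hWapp, hWapp, hVsmul, smul_comm]
  -- pointwise key identities
  have hΦsmul : ∀ (s : SS p k' A) (α : M →ₗ[SS p k' A] N), Φstar (s • α) = s • Φstar α := by
    intro s α
    ext m
    rw [hΦstar]
    show s • α (Φ m) = s • (Φstar α) m
    rw [hΦstar]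
  have hVΦ : ∀ α, V (Φstar α) = polyToSS p k' A E ^ h • α := by
    intro α
    have hLc : Lin (Φstar α) = α.comp Φlin :=
      (hLin2 _ _ (fun m => by rw [LinearMap.comp_apply, hΦlinι, hΦstar])).symm
    ext x
    rw [hVapp, hLc, LinearMap.comp_apply, hψ, map_smul]
    rfl
  have hΦV : ∀ β, Φstar (V β) = polyToSS p k' A E ^ h • β := by
    intro β
    ext m
    rw [hΦstar]
    show V β (Φ m) = polyToSS p k' A E ^ h • β m
    rw [hVapp]
    obtain ⟨n, hn⟩ := htors m
    have h2 : polyToSS p k' A E ^ n •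
        (Lin β (ψ (Φ m) - polyToSS p k' A E ^ h • ι m)) = 0 := by
      rw [← map_smul, hn, map_zero]
    have h3 := hNEn n _ h2
    rw [map_sub, map_smul, hLin1, sub_eq_zero] at h3
    exact h3
  have hWΦ : ∀ α, W (Φstar α) = (X : SS p k' A) ^ (e * a * h) • α := by
    intro α
    rw [hWapp, hVΦ, smul_smul, mul_comm, ← hXc]
  have hΦW : ∀ β, Φstar (W β) = (X : SS p k' A) ^ (e * a * h) • β := by
    intro β
    rw [hWapp, hΦsmul, hΦV, smul_smul, mul_comm, ← hXc]
  -- power application lemmas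
  have hu0pow : ∀ (n : ℕ) (α : M →ₗ[SS p k' A] N), (u0 ^ n) α = (X : SS p k' A) ^ n • α := by
    intro n
    induction n with
    | zero => intro α; rw [pow_zero, pow_zero, one_smul]; rfl
    | succ n ih =>
      intro α
      rw [pow_succ, Module.End.mul_apply, hu0, ih, smul_smul, ← pow_succ]
  have hu1pow : ∀ (n : ℕ) (β : M →ₛₗ[φS] N), (u1 ^ n) β = (X : SS p k' A) ^ n • β := by
    intro n
    induction n with
    | zero => intro β; rw [pow_zero, pow_zero, one_smul]; rfl
    | succ n ih =>
      intro β
      rw [pow_succ, Module.End.mul_apply, hu1, ih, smul_smul, ← pow_succ]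
  -- composition identities
  have hE1 : ∀ n : ℕ, T ∘ₗ (u0 ^ n) = (u1 ^ (p * n)) ∘ₗ T := by
    intro n
    ext α m
    rw [LinearMap.comp_apply, LinearMap.comp_apply, hu0pow, hu1pow, hTsmul, map_pow,
      hφX, ← pow_mul]
  have hE2 : ∀ n : ℕ, W ∘ₗ (u1 ^ n) = (u0 ^ n) ∘ₗ W := by
    intro n
    ext β m
    rw [LinearMap.comp_apply, LinearMap.comp_apply, hu1pow, hu0pow, hWsmul]
  have hE3 : W ∘ₗ Φstar = u0 ^ (e * a * h) := by
    ext α m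
    rw [LinearMap.comp_apply, hWΦ, hu0pow]
  have hE5 : δ = T - Φstar := by
    ext α m
    rw [hδ, LinearMap.sub_apply, LinearMap.sub_apply, hTapp, hΦstar]
  -- rTensor power lemmas
  have hR0pow : ∀ n : ℕ,
      ((LinearMap.rTensor Q u0 :
        Module.End A (TensorProduct A (M →ₗ[SS p k' A] N) Q)) ^ n)
        = LinearMap.rTensor Q (u0 ^ n) := by
    intro n
    induction n with
    | zero =>
      rw [pow_zero, pow_zero]
      rw [show (1 : Module.End A (M →ₗ[SS p k' A] N)) = LinearMap.id from rfl,
        show (1 : Module.End A (TensorProduct A (M →ₗ[SS p k' A] N) Q)) = LinearMap.id from rfl,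
        LinearMap.rTensor_id]
    | succ n ih =>
      rw [pow_succ, pow_succ, ih, Module.End.mul_eq_comp, Module.End.mul_eq_comp,
        ← LinearMap.rTensor_comp]
  have hR1pow : ∀ n : ℕ,
      ((LinearMap.rTensor Q u1 :
        Module.End A (TensorProduct A (M →ₛₗ[φS] N) Q)) ^ n)
        = LinearMap.rTensor Q (u1 ^ n) := by
    intro n
    induction n with
    | zero =>
      rw [pow_zero, pow_zero]
      rw [show (1 : Module.End A (M →ₛₗ[φS] N)) = LinearMap.id from rfl,
        show (1 : Module.End A (TensorProduct A (M →ₛₗ[φS] N) Q)) = LinearMap.id from rfl,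
        LinearMap.rTensor_id]
    | succ n ih =>
      rw [pow_succ, pow_succ, ih, Module.End.mul_eq_comp, Module.End.mul_eq_comp,
        ← LinearMap.rTensor_comp]
  have hinj0 : ∀ n : ℕ, Function.Injective
      ⇑((LinearMap.rTensor Q u0 :
        Module.End A (TensorProduct A (M →ₗ[SS p k' A] N) Q)) ^ n) := by
    intro n
    induction n with
    | zero => rw [pow_zero]; intro z1 z2 h12; simpa using h12
    | succ n ih =>
      rw [pow_succ]
      intro z1 z2 h12
      rw [Module.End.mul_apply, Module.End.mul_apply] at h12
      have h13 := ih h12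
      have h14 := htf0 (z1 - z2) (by rw [map_sub, h13, sub_self])
      exact sub_eq_zero.mp h14
  have hmono0 : ∀ {j n : ℕ}, j ≤ n →
      LinearMap.range ((LinearMap.rTensor Q u0 :
        Module.End A (TensorProduct A (M →ₗ[SS p k' A] N) Q)) ^ n)
        ≤ LinearMap.range ((LinearMap.rTensor Q u0 :
        Module.End A (TensorProduct A (M →ₗ[SS p k' A] N) Q)) ^ j) := by
    intro j n hjn
    rintro z ⟨w, rfl⟩
    refine ⟨((LinearMap.rTensor Q u0 : Module.End A _) ^ (n - j)) w, ?_⟩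
    rw [← Module.End.mul_apply, ← pow_add, Nat.add_sub_cancel' hjn]
  have hmono1 : ∀ {j n : ℕ}, j ≤ n →
      LinearMap.range ((LinearMap.rTensor Q u1 :
        Module.End A (TensorProduct A (M →ₛₗ[φS] N) Q)) ^ n)
        ≤ LinearMap.range ((LinearMap.rTensor Q u1 :
        Module.End A (TensorProduct A (M →ₛₗ[φS] N) Q)) ^ j) := by
    intro j n hjn
    rintro z ⟨w, rfl⟩
    refine ⟨((LinearMap.rTensor Q u1 : Module.End A _) ^ (n - j)) w, ?_⟩
    rw [← Module.End.mul_apply, ← pow_add, Nat.add_sub_cancel' hjn]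
  -- cancellation of Φ* against u-powers
  have hcancel : ∀ (z : TensorProduct A (M →ₗ[SS p k' A] N) Q) (n : ℕ),
      LinearMap.rTensor Q Φstar z ∈ LinearMap.range
        ((LinearMap.rTensor Q u1 :
          Module.End A (TensorProduct A (M →ₛₗ[φS] N) Q)) ^ n) →
      e * a * h ≤ n →
      z ∈ LinearMap.range ((LinearMap.rTensor Q u0 :
        Module.End A (TensorProduct A (M →ₗ[SS p k' A] N) Q)) ^ (n - e * a * h)) := by
    intro z n hmem hn
    obtain ⟨y, hy⟩ := hmem
    have h1 : LinearMap.rTensor Q (u0 ^ (e * a * h)) z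
        = LinearMap.rTensor Q (u0 ^ n) (LinearMap.rTensor Q W y) := by
      have h2 : LinearMap.rTensor Q (u0 ^ (e * a * h)) z
          = LinearMap.rTensor Q W (LinearMap.rTensor Q Φstar z) := by
        rw [← hE3, LinearMap.rTensor_comp, LinearMap.comp_apply]
      rw [h2, ← hy, hR1pow, ← LinearMap.comp_apply, ← LinearMap.rTensor_comp, hE2,
        LinearMap.rTensor_comp, LinearMap.comp_apply]
    refine ⟨LinearMap.rTensor Q W y, ?_⟩
    apply hinj0 (e * a * h)
    rw [← Module.End.mul_apply, ← pow_add, Nat.add_sub_cancel' hn, hR0pow, hR0pow]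
    exact h1.symm
  -- Part (1)
  have part1 : ∀ M₀ : ℕ, e * a * h + 1 ≤ (p - 1) * M₀ →
      ∀ z : TensorProduct A (M →ₗ[SS p k' A] N) Q,
        LinearMap.rTensor Q δ z = 0 →
        z ∈ LinearMap.range ((LinearMap.rTensor Q u0 :
          Module.End A (TensorProduct A (M →ₗ[SS p k' A] N) Q)) ^ M₀) →
        z = 0 := by
    intro M₀ hM₀ z hδz hzmem
    have hTΦ : LinearMap.rTensor Q Φstar z = LinearMap.rTensor Q T z := by
      have h2 : LinearMap.rTensor Q (T - Φstar) z = 0 := by rw [← hE5]; exact hδz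
      rw [LinearMap.rTensor_sub, LinearMap.sub_apply] at h2
      exact (sub_eq_zero.mp h2).symm
    have hstep : ∀ n, M₀ ≤ n →
        z ∈ LinearMap.range ((LinearMap.rTensor Q u0 : Module.End A _) ^ n) →
        z ∈ LinearMap.range ((LinearMap.rTensor Q u0 : Module.End A _) ^ (n + 1)) := by
      intro n hn hzn
      obtain ⟨w, hw⟩ := hzn
      have h5 : LinearMap.rTensor Q Φstar z
          ∈ LinearMap.range ((LinearMap.rTensor Q u1 : Module.End A _) ^ (p * n)) := by
        rw [hTΦ, ← hw, hR0pow, ← LinearMap.comp_apply, ← LinearMap.rTensor_comp, hE1,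
          LinearMap.rTensor_comp, LinearMap.comp_apply]
        exact ⟨LinearMap.rTensor Q T w, by rw [hR1pow]⟩
      have hple : (p - 1) * M₀ ≤ (p - 1) * n := Nat.mul_le_mul_left _ hn
      have hpn : p * n = (p - 1) * n + n := by
        have h6 : (p - 1 + 1) * n = (p - 1) * n + 1 * n := add_mul _ _ _
        rw [Nat.sub_add_cancel (by omega), one_mul] at h6
        exact h6
      have h7 := hcancel z (p * n) h5 (by omega)
      exact hmono0 (by omega) h7
    have hall : ∀ j : ℕ, z ∈ LinearMap.range
        ((LinearMap.rTensor Q u0 : Module.End A _) ^ (M₀ + j)) := by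
      intro j
      induction j with
      | zero => exact hzmem
      | succ j ih => exact hstep (M₀ + j) (by omega) ih
    have hz : z ∈ (⨅ n : ℕ, LinearMap.range ((LinearMap.rTensor Q u0 :
        Module.End A (TensorProduct A (M →ₗ[SS p k' A] N) Q)) ^ n)) := by
      refine (Submodule.mem_iInf _).mpr ?_
      intro n
      rcases le_total n M₀ with hle | hle
      · exact hmono0 hle hzmem
      · have h8 := hall (n - M₀)
        rwa [Nat.add_sub_cancel' hle] at h8
    rw [hsep] at hz
    simpa using hz
  refine ⟨part1, ?_⟩
  intro N₀ hN₀
  -- arithmetic facts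
  have hmono : ∀ x y : ℕ, x ≤ y → (p - 1) * x ≤ (p - 1) * y :=
    fun x y hxy => Nat.mul_le_mul_left _ hxy
  have hpe : p * e * a * h = p * (e * a * h) := by ring
  have hpeah : p * (e * a * h) = (p - 1) * (e * a * h) + (e * a * h) := by
    have h6 : (p - 1 + 1) * (e * a * h) = (p - 1) * (e * a * h) + 1 * (e * a * h) :=
      add_mul _ _ _
    rw [Nat.sub_add_cancel (by omega), one_mul] at h6
    exact h6
  rw [hpe] at hN₀
  have heN : e * a * h < N₀ := by
    by_contra hcon
    push_neg at hcon
    have h9 := hmono N₀ (e * a * h) hcon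
    omega
  have ha4 : e * a * h + 1 ≤ (p - 1) * (N₀ - e * a * h) := by
    have hms : (p - 1) * (N₀ - e * a * h) = (p - 1) * N₀ - (p - 1) * (e * a * h) :=
      Nat.mul_sub _ _ _
    omega
  have ha3 : N₀ ≤ p * (N₀ - e * a * h) := by
    have hms : p * (N₀ - e * a * h) = p * N₀ - p * (e * a * h) := Nat.mul_sub _ _ _
    have hpN : p * N₀ = (p - 1) * N₀ + N₀ := by
      have h6 : (p - 1 + 1) * N₀ = (p - 1) * N₀ + 1 * N₀ := add_mul _ _ _
      rw [Nat.sub_add_cancel (by omega), one_mul] at h6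
      exact h6
    omega
  refine ⟨?_, ?_, ?_⟩
  · -- MapsTo
    intro x hx
    simp only [Set.mem_setOf_eq] at hx
    have hx0 := hcancel x N₀ hx (by omega)
    obtain ⟨x', hx'⟩ := hx0
    show LinearMap.rTensor Q δ x ∈ (LinearMap.range ((LinearMap.rTensor Q u1 :
      Module.End A (TensorProduct A (M →ₛₗ[φS] N) Q)) ^ N₀) : Submodule A _)
    have hδx : LinearMap.rTensor Q δ x
        = LinearMap.rTensor Q T x - LinearMap.rTensor Q Φstar x := by
      rw [hE5, LinearMap.rTensor_sub, LinearMap.sub_apply]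
    rw [hδx]
    refine Submodule.sub_mem _ ?_ hx
    rw [← hx']
    have hTx : LinearMap.rTensor Q T
        (((LinearMap.rTensor Q u0 : Module.End A _) ^ (N₀ - e * a * h)) x')
        = ((LinearMap.rTensor Q u1 : Module.End A _) ^ (p * (N₀ - e * a * h)))
          (LinearMap.rTensor Q T x') := by
      rw [hR0pow, ← LinearMap.comp_apply, ← LinearMap.rTensor_comp, hE1,
        LinearMap.rTensor_comp, LinearMap.comp_apply, ← hR1pow]
    rw [hTx]
    exact hmono1 ha3 ⟨_, rfl⟩
  · -- InjOn
    intro x1 h1 x2 h2 heq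
    simp only [Set.mem_setOf_eq] at h1 h2
    have hδz : LinearMap.rTensor Q δ (x1 - x2) = 0 := by rw [map_sub, heq, sub_self]
    have hΦz : LinearMap.rTensor Q Φstar (x1 - x2) ∈ LinearMap.range
        ((LinearMap.rTensor Q u1 :
          Module.End A (TensorProduct A (M →ₛₗ[φS] N) Q)) ^ N₀) := by
      rw [map_sub]; exact Submodule.sub_mem _ h1 h2
    have hz0 := hcancel _ N₀ hΦz (by omega)
    have h10 := part1 (N₀ - e * a * h) ha4 _ hδz hz0
    exact sub_eq_zero.mp h10
  · -- SurjOn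
    intro y hy
    obtain ⟨w, hw⟩ := hy
    -- the sequence of exponents
    set msq : ℕ → ℕ := fun k => Nat.rec (N₀ - e*a*h) (fun _ mk => p * mk - e*a*h) k
      with hmsqdef
    have hmsq0 : msq 0 = N₀ - e * a * h := rfl
    have hmsqs : ∀ k, msq (k+1) = p * msq k - e * a * h := fun k => rfl
    have hpnk : ∀ k : ℕ, p * msq k = (p - 1) * msq k + msq k := by
      intro k
      have h6 : (p - 1 + 1) * msq k = (p - 1) * msq k + 1 * msq k := add_mul _ _ _
      rw [Nat.sub_add_cancel (by omega), one_mul] at h6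
      exact h6
    have hm2 : ∀ k, e * a * h + 1 ≤ (p - 1) * msq k := by
      intro k
      induction k with
      | zero => rw [hmsq0]; exact ha4
      | succ k ih =>
        have h1 := hpnk k
        have hgrow : msq k ≤ msq (k+1) := by rw [hmsqs]; omega
        have h2 := hmono _ _ hgrow
        omega
    have hgrow : ∀ k, msq k + 1 ≤ msq (k + 1) := by
      intro k
      have h1 := hm2 k
      have h2 := hpnk k
      rw [hmsqs]
      omega
    have hm9 : ∀ k, msq 0 + k ≤ msq k := by
      intro k
      induction k with
      | zero => omega
      | succ k ih => have := hgrow k; omega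
    have hm4 : ∀ k, k + 1 ≤ msq k := by
      intro k
      have h1 := hm9 k
      have h0 : 1 ≤ msq 0 := by rw [hmsq0]; omega
      omega
    have hm6 : ∀ k, msq (k + 1) + e * a * h = p * msq k := by
      intro k
      have h1 := hm2 k
      have h2 := hpnk k
      rw [hmsqs]
      omega
    have hm5 : msq 0 + e * a * h = N₀ := by rw [hmsq0]; omega
    have hm7 : ∀ k, N₀ ≤ p * msq k := by
      intro k
      have h1 := hm6 k
      have h2 := hm9 (k + 1)
      have h3 := hm5
      omega
    have hm8 : ∀ k, k + 1 ≤ p * msq k - N₀ := by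
      intro k
      have h1 := hm6 k
      have h2 := hm9 (k + 1)
      have h3 := hm5
      omega
    -- the sequence of approximation operators
    set Dsq : ℕ → ((M →ₛₗ[φS] N) →ₗ[A] (M →ₗ[SS p k' A] N)) :=
      fun k => Nat.rec W (fun _ Dk => W ∘ₗ (T ∘ₗ Dk)) k with hDsqdef
    have hDsq0 : Dsq 0 = W := rfl
    have hDsqs : ∀ k, Dsq (k + 1) = W ∘ₗ (T ∘ₗ Dsq k) := fun k => rfl
    -- the series defining H
    have hgmem : ∀ (β : M →ₛₗ[φS] N) (x : M) (k : ℕ),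
        IsXpow p k' A k ((X : SS p k' A) ^ (msq k) • (Dsq k β x)) := by
      intro β x k
      refine IsXpow.mono (by have := hm4 k; omega) ⟨Dsq k β x, rfl⟩
    set HL : (M →ₛₗ[φS] N) → M → N := fun β x =>
      limOf p k' A hNcomp (fun k => (X : SS p k' A) ^ (msq k) • (Dsq k β x)) (hgmem β x)
      with hHLdef
    have hHLspec : ∀ β x K, IsXpow p k' A K
        (HL β x - ∑ k ∈ Finset.range K, (X : SS p k' A) ^ (msq k) • (Dsq k β x)) :=
      fun β x => limOf_spec hNcomp _ (hgmem β x)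
    have hHLuniq : ∀ β x (L : N),
        (∀ K, IsXpow p k' A K
          (L - ∑ k ∈ Finset.range K, (X : SS p k' A) ^ (msq k) • (Dsq k β x))) →
        L = HL β x :=
      fun β x L hL => limOf_unique hNcomp _ (hgmem β x) L hL
    -- H as a function
    let Hfun : (M →ₛₗ[φS] N) → (M →ₗ[SS p k' A] N) := fun β =>
      { toFun := fun x => - HL β x
        map_add' := fun x1 x2 => by
          have h1 : HL β x1 + HL β x2 = HL β (x1 + x2) := by
            apply hHLuniq
            intro K
            have e1 : ∀ k : ℕ, (X : SS p k' A) ^ (msq k) • (Dsq k β (x1 + x2))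
                = (X : SS p k' A) ^ (msq k) • (Dsq k β x1)
                  + (X : SS p k' A) ^ (msq k) • (Dsq k β x2) := by
              intro k
              rw [map_add, smul_add]
            rw [Finset.sum_congr rfl (fun k _ => e1 k), Finset.sum_add_distrib]
            have h3 := (hHLspec β x1 K).add (hHLspec β x2 K)
            rwa [sub_add_sub_comm] at h3
          rw [← h1, neg_add]
        map_smul' := fun s x => by
          rw [RingHom.id_apply]
          have h1 : s • HL β x = HL β (s • x) := by
            apply hHLuniq
            intro K
            have e1 : ∀ k : ℕ, (X : SS p k' A) ^ (msq k) • (Dsq k β (s • x))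
                = s • ((X : SS p k' A) ^ (msq k) • (Dsq k β x)) := by
              intro k
              rw [map_smul, smul_comm]
            rw [Finset.sum_congr rfl (fun k _ => e1 k), ← Finset.smul_sum, ← smul_sub]
            exact (hHLspec β x K).smul s
          rw [← h1, smul_neg] }
    have hHfunapp : ∀ β x, Hfun β x = - HL β x := fun β x => rfl
    let H : (M →ₛₗ[φS] N) →ₗ[A] (M →ₗ[SS p k' A] N) :=
      { toFun := Hfun
        map_add' := fun β1 β2 => by
          ext x
          rw [LinearMap.add_apply, hHfunapp, hHfunapp, hHfunapp]
          have h1 : HL β1 x + HL β2 x = HL (β1 + β2) x := by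
            apply hHLuniq
            intro K
            have e1 : ∀ k : ℕ, (X : SS p k' A) ^ (msq k) • (Dsq k (β1 + β2) x)
                = (X : SS p k' A) ^ (msq k) • (Dsq k β1 x)
                  + (X : SS p k' A) ^ (msq k) • (Dsq k β2 x) := by
              intro k
              rw [map_add, LinearMap.add_apply, smul_add]
            rw [Finset.sum_congr rfl (fun k _ => e1 k), Finset.sum_add_distrib]
            have h3 := (hHLspec β1 x K).add (hHLspec β2 x K)
            rwa [sub_add_sub_comm] at h3
          rw [← h1, neg_add]
        map_smul' := fun r β => by
          rw [RingHom.id_apply, hsm0 r (Hfun β)]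
          ext x
          rw [hHfunapp, LinearMap.smul_apply, hHfunapp]
          have h1 : AtoSS p k' A r • HL β x = HL (r • β) x := by
            apply hHLuniq
            intro K
            have e1 : ∀ k : ℕ, (X : SS p k' A) ^ (msq k) • (Dsq k (r • β) x)
                = AtoSS p k' A r • ((X : SS p k' A) ^ (msq k) • (Dsq k β x)) := by
              intro k
              rw [map_smul, hsm0, LinearMap.smul_apply, smul_comm]
            rw [Finset.sum_congr rfl (fun k _ => e1 k), ← Finset.smul_sum, ← smul_sub]
            exact (hHLspec β x K).smul _
          rw [← h1, smul_neg] }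
    have hHapp : ∀ β x, H β x = - HL β x := fun β x => rfl
    -- the series defining G
    set g2 : (M →ₛₗ[φS] N) → M → ℕ → N := fun β x k =>
      Nat.casesOn k (β x)
        (fun j => (X : SS p k' A) ^ (p * msq j - N₀) • (T (Dsq j β) x)) with hg2def
    have hg2zero : ∀ β x, g2 β x 0 = β x := fun β x => rfl
    have hg2succ : ∀ β x j, g2 β x (j+1)
        = (X : SS p k' A) ^ (p * msq j - N₀) • (T (Dsq j β) x) := fun β x j => rfl
    have hg2mem : ∀ (β : M →ₛₗ[φS] N) (x : M) (k : ℕ), IsXpow p k' A k (g2 β x k) := by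
      intro β x k
      cases k with
      | zero => exact IsXpow.ofZero _
      | succ j =>
        rw [hg2succ]
        exact IsXpow.mono (by have := hm8 j; omega) ⟨T (Dsq j β) x, rfl⟩
    set Glm : (M →ₛₗ[φS] N) → M → N := fun β x =>
      limOf p k' A hNcomp (g2 β x) (hg2mem β x) with hGlmdef
    have hGlmspec : ∀ β x K, IsXpow p k' A K
        (Glm β x - ∑ k ∈ Finset.range K, g2 β x k) :=
      fun β x => limOf_spec hNcomp _ (hg2mem β x)
    have hGlmuniq : ∀ β x (L : N),
        (∀ K, IsXpow p k' A K (L - ∑ k ∈ Finset.range K, g2 β x k)) → L = Glm β x :=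
      fun β x L hL => limOf_unique hNcomp _ (hg2mem β x) L hL
    let Gfun : (M →ₛₗ[φS] N) → (M →ₛₗ[φS] N) := fun β =>
      { toFun := fun x => - Glm β x
        map_add' := fun x1 x2 => by
          have h1 : Glm β x1 + Glm β x2 = Glm β (x1 + x2) := by
            apply hGlmuniq
            intro K
            have e1 : ∀ k : ℕ, g2 β (x1 + x2) k = g2 β x1 k + g2 β x2 k := by
              intro k
              cases k with
              | zero => rw [hg2zero, hg2zero, hg2zero, map_add]
              | succ j => rw [hg2succ, hg2succ, hg2succ, map_add, smul_add]
            rw [Finset.sum_congr rfl (fun k _ => e1 k), Finset.sum_add_distrib]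
            have h3 := (hGlmspec β x1 K).add (hGlmspec β x2 K)
            rwa [sub_add_sub_comm] at h3
          rw [← h1, neg_add]
        map_smul' := fun s x => by
          have h1 : φS s • Glm β x = Glm β (s • x) := by
            apply hGlmuniq
            intro K
            have e1 : ∀ k : ℕ, g2 β (s • x) k = φS s • g2 β x k := by
              intro k
              cases k with
              | zero => rw [hg2zero, hg2zero, LinearMap.map_smulₛₗ]
              | succ j =>
                rw [hg2succ, hg2succ, LinearMap.map_smulₛₗ, smul_comm]
            rw [Finset.sum_congr rfl (fun k _ => e1 k), ← Finset.smul_sum, ← smul_sub]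
            exact (hGlmspec β x K).smul _
          rw [← h1, smul_neg] }
    have hGfunapp : ∀ β x, Gfun β x = - Glm β x := fun β x => rfl
    let G : (M →ₛₗ[φS] N) →ₗ[A] (M →ₛₗ[φS] N) :=
      { toFun := Gfun
        map_add' := fun β1 β2 => by
          ext x
          rw [LinearMap.add_apply, hGfunapp, hGfunapp, hGfunapp]
          have h1 : Glm β1 x + Glm β2 x = Glm (β1 + β2) x := by
            apply hGlmuniq
            intro K
            have e1 : ∀ k : ℕ, g2 (β1 + β2) x k = g2 β1 x k + g2 β2 x k := by
              intro k
              cases k with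
              | zero => rw [hg2zero, hg2zero, hg2zero, LinearMap.add_apply]
              | succ j =>
                rw [hg2succ, hg2succ, hg2succ, map_add, map_add, LinearMap.add_apply,
                  smul_add]
            rw [Finset.sum_congr rfl (fun k _ => e1 k), Finset.sum_add_distrib]
            have h3 := (hGlmspec β1 x K).add (hGlmspec β2 x K)
            rwa [sub_add_sub_comm] at h3
          rw [← h1, neg_add]
        map_smul' := fun r β => by
          rw [RingHom.id_apply, hsm1 r (Gfun β)]
          ext x
          rw [hGfunapp, LinearMap.smul_apply, hGfunapp]
          have h1 : AtoSS p k' A r • Glm β x = Glm (r • β) x := by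
            apply hGlmuniq
            intro K
            have e1 : ∀ k : ℕ, g2 (r • β) x k = AtoSS p k' A r • g2 β x k := by
              intro k
              cases k with
              | zero => rw [hg2zero, hg2zero, hsm1, LinearMap.smul_apply]
              | succ j =>
                rw [hg2succ, hg2succ, map_smul, map_smul, hsm1, LinearMap.smul_apply,
                  smul_comm]
            rw [Finset.sum_congr rfl (fun k _ => e1 k), ← Finset.smul_sum, ← smul_sub]
            exact (hGlmspec β x K).smul _
          rw [← h1, smul_neg] }
    have hGapp : ∀ β x, G β x = - Glm β x := fun β x => rfl
    -- telescoping identities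
    have hH0 : ∀ β : M →ₛₗ[φS] N,
        Φstar ((X : SS p k' A) ^ (msq 0) • (Dsq 0 β)) = (X : SS p k' A) ^ N₀ • β := by
      intro β
      rw [hDsq0, hΦsmul, hΦW, smul_smul, ← pow_add, hm5]
    have hHs : ∀ (β : M →ₛₗ[φS] N) (k : ℕ),
        Φstar ((X : SS p k' A) ^ (msq (k+1)) • (Dsq (k+1) β))
          = T ((X : SS p k' A) ^ (msq k) • (Dsq k β)) := by
      intro β k
      rw [hDsqs, LinearMap.comp_apply, LinearMap.comp_apply, hΦsmul, hΦW, smul_smul,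
        ← pow_add, hm6 k, hTsmul, map_pow, hφX, ← pow_mul]
    have hFk : ∀ (β : M →ₛₗ[φS] N) (x : M) (k : ℕ),
        (X : SS p k' A) ^ (msq k) • (Dsq k β (Φ x))
          = Φstar ((X : SS p k' A) ^ (msq k) • (Dsq k β)) x := by
      intro β x k
      rw [hΦstar]
      rfl
    have hTk : ∀ (β : M →ₛₗ[φS] N) (x : M) (k : ℕ),
        ΦN ((X : SS p k' A) ^ (msq k) • (Dsq k β x))
          = T ((X : SS p k' A) ^ (msq k) • (Dsq k β)) x := by
      intro β x k
      rw [hTapp]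
      rfl
    -- δ ∘ H = u1^N₀ pointwise
    have hK1 : ∀ (β : M →ₛₗ[φS] N) (x : M),
        δ (H β) x = (X : SS p k' A) ^ N₀ • β x := by
      intro β x
      rw [hδ, hHapp β x, show (H β) (Φ x) = - HL β (Φ x) from rfl, map_neg,
        sub_neg_eq_add, ← sub_eq_zero]
      apply eq_zero_of_forall_isXpow hNcomp
      intro K
      set S1 := ∑ k ∈ Finset.range (K+1), (X : SS p k' A) ^ (msq k) • (Dsq k β x)
        with hS1
      set S2 := ∑ k ∈ Finset.range (K+1), (X : SS p k' A) ^ (msq k) • (Dsq k β (Φ x))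
        with hS2
      have hspec1 : IsXpow p k' A (K+1) (ΦN (HL β x) - ΦN S1) := by
        have h3 := (hHLspec β x (K+1)).map hφX ΦN
        rwa [map_sub] at h3
      have hspec2 : IsXpow p k' A (K+1) (HL β (Φ x) - S2) := hHLspec β (Φ x) (K+1)
      have hΦNS1 : ΦN S1
          = ∑ k ∈ Finset.range (K+1), T ((X : SS p k' A) ^ (msq k) • (Dsq k β)) x := by
        rw [hS1, map_sum]
        exact Finset.sum_congr rfl (fun k _ => hTk β x k)
      have hS2' : S2
          = ∑ k ∈ Finset.range (K+1), Φstar ((X : SS p k' A) ^ (msq k) • (Dsq k β)) x := by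
        rw [hS2]
        exact Finset.sum_congr rfl (fun k _ => hFk β x k)
      have htel : S2 - ΦN S1 = (X : SS p k' A) ^ N₀ • β x
          - T ((X : SS p k' A) ^ (msq K) • (Dsq K β)) x := by
        rw [hS2', hΦNS1, Finset.sum_range_succ', Finset.sum_range_succ]
        have e2 : ∀ k : ℕ, Φstar ((X : SS p k' A) ^ (msq (k+1)) • (Dsq (k+1) β)) x
            = T ((X : SS p k' A) ^ (msq k) • (Dsq k β)) x := fun k => by rw [hHs]
        rw [Finset.sum_congr rfl (fun k _ => e2 k)]
        have e0 : Φstar ((X : SS p k' A) ^ (msq 0) • (Dsq 0 β)) x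
            = (X : SS p k' A) ^ N₀ • β x := by
          rw [hH0]
          rfl
        rw [e0]
        abel
      have hTT : IsXpow p k' A K (T ((X : SS p k' A) ^ (msq K) • (Dsq K β)) x) := by
        have e3 : T ((X : SS p k' A) ^ (msq K) • (Dsq K β)) x
            = (X : SS p k' A) ^ (p * msq K) • (T (Dsq K β) x) := by
          rw [hTsmul, map_pow, hφX, ← pow_mul]
          rfl
        rw [e3]
        refine IsXpow.mono ?_ ⟨T (Dsq K β) x, rfl⟩
        have h4 := hm4 K
        have h6 : msq K ≤ p * msq K := Nat.le_mul_of_pos_left _ (by omega)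
        omega
      have hfinal : -(ΦN (HL β x)) + HL β (Φ x) - (X : SS p k' A) ^ N₀ • β x
          = -(ΦN (HL β x) - ΦN S1) + (HL β (Φ x) - S2)
            + -(T ((X : SS p k' A) ^ (msq K) • (Dsq K β)) x) := by
        have e4 : -(T ((X : SS p k' A) ^ (msq K) • (Dsq K β)) x)
            = S2 - ΦN S1 - (X : SS p k' A) ^ N₀ • β x := by
          rw [htel]
          abel
        rw [e4]
        abel
      rw [hfinal]
      exact ((hspec1.neg.add hspec2).mono (by omega)).add hTT.neg
    -- Φ* ∘ H = u1^N₀ ∘ G pointwise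
    have hK2 : ∀ (β : M →ₛₗ[φS] N) (x : M),
        Φstar (H β) x = (X : SS p k' A) ^ N₀ • (G β x) := by
      intro β x
      rw [hΦstar, show (H β) (Φ x) = - HL β (Φ x) from rfl, hGapp, smul_neg, neg_inj]
      refine (hHLuniq β (Φ x) ((X : SS p k' A) ^ N₀ • Glm β x) ?_).symm
      intro K
      have hterm : ∀ k : ℕ, (X : SS p k' A) ^ (msq k) • (Dsq k β (Φ x))
          = (X : SS p k' A) ^ N₀ • g2 β x k := by
        intro k
        cases k with
        | zero =>
          rw [hg2zero, hFk β x 0, hH0]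
          rfl
        | succ j =>
          rw [hg2succ, hFk β x (j+1), hHs β j, hTsmul, map_pow, hφX, ← pow_mul]
          show (X : SS p k' A) ^ (p * msq j) • (T (Dsq j β) x) = _
          rw [smul_smul, ← pow_add, Nat.add_sub_cancel' (hm7 j)]
      have hsum : ∑ k ∈ Finset.range K, (X : SS p k' A) ^ (msq k) • (Dsq k β (Φ x))
          = (X : SS p k' A) ^ N₀ • ∑ k ∈ Finset.range K, g2 β x k := by
        rw [Finset.smul_sum]
        exact Finset.sum_congr rfl (fun k _ => hterm k)
      rw [hsum, ← smul_sub]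
      exact (hGlmspec β x K).smul _
    -- package as map identities
    have hE6 : δ ∘ₗ H = (u1 ^ N₀ : Module.End A (M →ₛₗ[φS] N)) := by
      refine LinearMap.ext (fun β => ?_)
      rw [LinearMap.comp_apply, hu1pow]
      ext x
      rw [hK1]
      rfl
    have hE7 : Φstar ∘ₗ H = (u1 ^ N₀ : Module.End A (M →ₛₗ[φS] N)) ∘ₗ G := by
      refine LinearMap.ext (fun β => ?_)
      rw [LinearMap.comp_apply, LinearMap.comp_apply, hu1pow]
      ext x
      rw [hK2]
      rfl
    -- conclude
    refine ⟨LinearMap.rTensor Q H w, ?_, ?_⟩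
    · simp only [Set.mem_setOf_eq]
      have h1 : LinearMap.rTensor Q Φstar (LinearMap.rTensor Q H w)
          = ((LinearMap.rTensor Q u1 :
              Module.End A (TensorProduct A (M →ₛₗ[φS] N) Q)) ^ N₀)
            (LinearMap.rTensor Q G w) := by
        rw [← LinearMap.comp_apply, ← LinearMap.rTensor_comp, hE7,
          LinearMap.rTensor_comp, LinearMap.comp_apply, ← hR1pow]
      rw [h1]
      exact ⟨_, rfl⟩
    · have h1 : LinearMap.rTensor Q δ (LinearMap.rTensor Q H w)
          = ((LinearMap.rTensor Q u1 :
              Module.End A (TensorProduct A (M →ₛₗ[φS] N) Q)) ^ N₀) w := by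
        rw [← LinearMap.comp_apply, ← LinearMap.rTensor_comp, hE6, ← hR1pow]
      rw [h1, hw]
end
end

section
/- Let a ≥ 1 and let A be a Noetherian Z_p-algebra with p^a = 0. Let E(u) ∈ W(k')[u] be an Eisenstein polynomial of degree e', and let M and N be Breuil–Kisin modules with A-coefficients, with N of height at most h. Write N[1/u] := N ⊗_{S_A} S_A[1/u], with its induced Φ-structure, and let f : M → N[1/u]/N be an S_A-linear map satisfying f ∘ Φ_M = Φ̄ ∘ φ*f, where Φ̄ : φ*(N[1/u]/N) → N[1/u]/N is the induced map. Then for every integer i ≥ ⌊e'·a·h/(p−1)⌋, the image f(M) is killed by u^i. -/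
open scoped TensorProduct
open PowerSeries

noncomputable section

variable (p : ℕ) [Fact p.Prime]
variable (k' : Type) [Field k'] [Fintype k'] [CharP k' p]

set_option linter.unusedSectionVars false

section Generic
variable {S : Type} [CommRing S] (φS : S →+* S)
variable {N : Type} [AddCommGroup N] [Module S N]
variable {r : ℕ}

lemma pi_decomp (v : Fin r → S) :
    ∑ i, v i • (Pi.single i (1 : S) : Fin r → S) = v := by
  conv_rhs => rw [← Finset.univ_sum_single v]
  refine Finset.sum_congr rfl fun i _ => ?_
  funext j
  by_cases h : j = i <;> simp [Pi.single_apply, h]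

/-- the concrete `φ`-semilinear map `N → S^r`, `y ↦ φ ∘ (ρ y)`. -/
def iotaC (ρ : N →ₗ[S] (Fin r → S)) : N →ₛₗ[φS] (Fin r → S) where
  toFun y := fun i => φS (ρ y i)
  map_add' x y := by funext i; simp [map_add]
  map_smul' c x := by funext i; simp [Pi.smul_apply, smul_eq_mul, map_mul]

lemma iotaC_apply (ρ : N →ₗ[S] (Fin r → S)) (y : N) (i : Fin r) :
    iotaC φS ρ y i = φS (ρ y i) := rfl

/-- key computation for semilinear maps through the splitting. -/
lemma semilinear_sum (ρ : N →ₗ[S] (Fin r → S)) (π : (Fin r → S) →ₗ[S] N)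
    (hπρ : ∀ y, π (ρ y) = y) {Q : Type} [AddCommGroup Q] [Module S Q]
    (g : N →ₛₗ[φS] Q) (y : N) :
    ∑ i, φS (ρ y i) • g (π ((Pi.single i (1 : S) : Fin r → S))) = g y := by
  have hy : y = ∑ i, ρ y i • π (Pi.single i (1 : S) : Fin r → S) := by
    conv_lhs => rw [← hπρ y, ← pi_decomp (ρ y)]
    rw [map_sum]
    simp [map_smul]
  conv_rhs => rw [hy]
  rw [map_sum]
  simp [g.map_smulₛₗ]

end Generic

section Generic2
variable {S : Type} [CommRing S] (φS : S →+* S)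
variable {N : Type} [AddCommGroup N] [Module S N]
variable {r : ℕ}

/-- the concrete model for `φ*N`: the span of the image of `iotaC` in `S^r`. -/
def phiStarC (ρ : N →ₗ[S] (Fin r → S)) : Submodule S (Fin r → S) :=
  Submodule.span S (Set.range (iotaC φS ρ))

lemma iotaC_mem (ρ : N →ₗ[S] (Fin r → S)) (y : N) : iotaC φS ρ y ∈ phiStarC φS ρ :=
  Submodule.subset_span (Set.mem_range_self y)

/-- `iotaC` with codomain restricted to `phiStarC`. -/
def iotaC' (ρ : N →ₗ[S] (Fin r → S)) : N →ₛₗ[φS] (phiStarC φS ρ) :=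
  (iotaC φS ρ).codRestrict (phiStarC φS ρ) (iotaC_mem φS ρ)

lemma iotaC'_coe (ρ : N →ₗ[S] (Fin r → S)) (y : N) :
    (iotaC' φS ρ y : Fin r → S) = iotaC φS ρ y := rfl

/-- the linear map `S^r → Q` extending a semilinear `g : N → Q` through `iotaC`. -/
def LamFull (π : (Fin r → S) →ₗ[S] N) {Q : Type} [AddCommGroup Q] [Module S Q]
    (g : N →ₛₗ[φS] Q) : (Fin r → S) →ₗ[S] Q :=
  ∑ i, (LinearMap.proj i).smulRight (g (π (Pi.single i (1 : S) : Fin r → S)))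

lemma LamFull_apply (π : (Fin r → S) →ₗ[S] N) {Q : Type} [AddCommGroup Q] [Module S Q]
    (g : N →ₛₗ[φS] Q) (v : Fin r → S) :
    LamFull φS π g v = ∑ i, v i • g (π (Pi.single i (1 : S) : Fin r → S)) := by
  simp [LamFull, LinearMap.sum_apply]

lemma LamFull_iotaC (ρ : N →ₗ[S] (Fin r → S)) (π : (Fin r → S) →ₗ[S] N)
    (hπρ : ∀ y, π (ρ y) = y) {Q : Type} [AddCommGroup Q] [Module S Q]
    (g : N →ₛₗ[φS] Q) (y : N) :
    LamFull φS π g (iotaC φS ρ y) = g y := by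
  rw [LamFull_apply]
  exact semilinear_sum φS ρ π hπρ g y

/-- the concrete model satisfies the universal property of base change. -/
lemma isFrobeniusBaseChange_iotaC' (ρ : N →ₗ[S] (Fin r → S)) (π : (Fin r → S) →ₗ[S] N)
    (hπρ : ∀ y, π (ρ y) = y) : IsFrobeniusBaseChange φS (iotaC' φS ρ) := by
  intro Q _ _ g
  refine ⟨(LamFull φS π g).comp (phiStarC φS ρ).subtype, fun y => ?_, fun h' hh' => ?_⟩
  · exact LamFull_iotaC φS ρ π hπρ g y
  · ext ⟨x, hx⟩
    refine Submodule.span_induction (p := fun x hx =>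
        h' ⟨x, hx⟩ = ((LamFull φS π g).comp (phiStarC φS ρ).subtype) ⟨x, hx⟩)
      ?_ ?_ ?_ ?_ hx
    · rintro _ ⟨y, rfl⟩
      have h1 : (⟨iotaC φS ρ y, Submodule.subset_span (Set.mem_range_self y)⟩ :
          phiStarC φS ρ) = iotaC' φS ρ y := rfl
      rw [h1, hh' y]
      exact (LamFull_iotaC φS ρ π hπρ g y).symm
    · show h' ⟨0, _⟩ = _
      have : (⟨0, Submodule.zero_mem _⟩ : phiStarC φS ρ) = 0 := rfl
      rw [this, map_zero, map_zero]
    · intro x y hxmem hymem hx hy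
      show h' ⟨x + y, _⟩ = _
      have : (⟨x + y, Submodule.add_mem _ hxmem hymem⟩ : phiStarC φS ρ) =
          ⟨x, hxmem⟩ + ⟨y, hymem⟩ := rfl
      rw [this, map_add, map_add, hx, hy]
    · intro c x hxmem hx
      show h' ⟨c • x, _⟩ = _
      have : (⟨c • x, Submodule.smul_mem _ c hxmem⟩ : phiStarC φS ρ) =
          c • (⟨x, hxmem⟩ : phiStarC φS ρ) := rfl
      rw [this, map_smul, map_smul, hx]

end Generic2

section Key
variable {S : Type} [CommRing S] {φS : S →+* S}
variable {N : Type} [AddCommGroup N] [Module S N]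

/-- The key divisibility: if `Φ_N n` is divisible by `X^D` with `D > qh`, then `n ∈ X·N`. -/
lemma key_div (ΦN : N →ₛₗ[φS] N) (X E c' : S) (q h : ℕ)
    (hEc : E * c' = X ^ q)
    (hXreg : ∀ s : S, X * s = 0 → s = 0)
    (hφdvd : ∀ s : S, X ∣ φS s → X ∣ s)
    (hNht : ∀ x : N, E ^ h • x ∈ Submodule.span S (Set.range ⇑ΦN))
    (hiso : LinearizationBijectiveAfterInverting φS E ΦN)
    {r : ℕ} (ρ : N →ₗ[S] (Fin r → S)) (π : (Fin r → S) →ₗ[S] N) (hπρ : ∀ y, π (ρ y) = y)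
    (n n' : N) (D : ℕ) (hD : q * h < D) (hΦn : ΦN n = X ^ D • n') :
    ∃ n₂ : N, n = X • n₂ := by
  -- regularity
  have hXregpow : ∀ (k : ℕ) (s : S), X ^ k * s = 0 → s = 0 := by
    intro k
    induction k with
    | zero => intro s hs; simpa using hs
    | succ k ih =>
      intro s hs
      refine ih s (hXreg _ ?_)
      rw [← mul_assoc, mul_comm X (X ^ k), ← pow_succ]
      exact hs
  have hEreg : ∀ (k : ℕ) (s : S), E ^ k * s = 0 → s = 0 := by
    intro k s hs
    refine hXregpow (q * k) s ?_
    have : (X ^ q) ^ k * s = c' ^ k * (E ^ k * s) := by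
      rw [← hEc]; ring
    rw [← pow_mul] at this
    rw [this, hs, mul_zero]
  -- the concrete model
  set ι : N →ₛₗ[φS] (Fin r → S) := iotaC φS ρ with hι
  set ι' : N →ₛₗ[φS] (phiStarC φS ρ) := iotaC' φS ρ with hι'
  set Λ : (Fin r → S) →ₗ[S] N := LamFull φS π ΦN with hΛ
  set Λ' : (phiStarC φS ρ) →ₗ[S] N := Λ.comp (phiStarC φS ρ).subtype with hΛ'
  have hΛι : ∀ y, Λ' (ι' y) = ΦN y := fun y => LamFull_iotaC φS ρ π hπρ ΦN y
  have hUP' : IsFrobeniusBaseChange φS ι' := isFrobeniusBaseChange_iotaC' φS ρ π hπρ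
  obtain ⟨P, instP1, instP2, ιP, Φlin, hUP, hΦl, hbij⟩ := hiso
  letI := instP1; letI := instP2
  obtain ⟨θ, hθ, -⟩ := hUP (phiStarC φS ρ) inferInstance inferInstance ι'
  obtain ⟨θ', hθ', -⟩ := hUP' P inferInstance inferInstance ιP
  have hθθ' : θ'.comp θ = LinearMap.id :=
    (hUP P inferInstance inferInstance ιP).unique
      (fun m => by simp [hθ, hθ']) (fun m => rfl)
  have hθ'θ : θ.comp θ' = LinearMap.id :=
    (hUP' (phiStarC φS ρ) inferInstance inferInstance ι').unique
      (fun m => by simp [hθ, hθ']) (fun m => rfl)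
  have hΛθ : Λ'.comp θ = Φlin :=
    (hUP N inferInstance inferInstance ΦN).unique
      (fun m => by simp [hθ, hΛι]) hΦl
  -- torsion-freeness of N and P'
  have hNtf : ∀ (c : S) (y : N), (∀ s : S, c * s = 0 → s = 0) → c • y = 0 → y = 0 := by
    intro c y hreg hy
    have hρ : ρ y = 0 := by
      funext i
      have : c * ρ y i = 0 := by
        have := congrFun (congrArg (fun z => ρ z) hy) i
        simpa [map_smul, Pi.smul_apply, smul_eq_mul] using this
      exact hreg _ this
    rw [← hπρ y, hρ, map_zero]
  have hP'tf : ∀ (k : ℕ) (x : phiStarC φS ρ), E ^ k • x = 0 → x = 0 := by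
    intro k x hx
    ext1
    have hx' : E ^ k • (x : Fin r → S) = 0 := by
      have := congrArg (Submodule.subtype _) hx
      simpa using this
    funext i
    have : E ^ k * (x : Fin r → S) i = 0 := by
      have := congrFun hx' i
      simpa [Pi.smul_apply, smul_eq_mul] using this
    simpa using hEreg k _ this
  have hPtf : ∀ (k : ℕ) (x : P), E ^ k • x = 0 → x = 0 := by
    intro k x hx
    have h1 : θ x = 0 := hP'tf k (θ x) (by rw [← map_smul, hx, map_zero])
    have := congrArg θ' h1
    rw [map_zero] at this
    have h2 : θ'.comp θ x = 0 := this
    rw [hθθ'] at h2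
    simpa using h2
  -- injectivity of Φlin
  have hΦlininj : Function.Injective ⇑Φlin := by
    have hker : ∀ z : P, Φlin z = 0 → z = 0 := by
      intro z hz
      have h0 : LocalizedModule.map (Submonoid.powers E) Φlin (LocalizedModule.mk z 1) =
          LocalizedModule.map (Submonoid.powers E) Φlin 0 := by
        rw [LocalizedModule.map_mk, hz, map_zero, LocalizedModule.zero_mk]
      have h1 : LocalizedModule.mk z (1 : Submonoid.powers E) = 0 := hbij.injective h0
      rw [← LocalizedModule.zero_mk (1 : Submonoid.powers E)] at h1
      obtain ⟨u, hu⟩ := LocalizedModule.mk_eq.mp h1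
      obtain ⟨k, hk⟩ := u.2
      have h3 : (u : S) • z = 0 := by simpa [Submonoid.smul_def] using hu
      rw [← hk] at h3
      exact hPtf k z h3
    intro x y hxy
    have : Φlin (x - y) = 0 := by rw [map_sub, hxy, sub_self]
    have h2 := hker _ this
    exact sub_eq_zero.mp h2
  -- injectivity of the concrete linearization
  have hΛ'inj : Function.Injective ⇑Λ' := by
    intro x y hxy
    have hid : ∀ z : phiStarC φS ρ, θ (θ' z) = z := by
      intro z
      have := LinearMap.congr_fun hθ'θ z
      simpa using this
    have h1 : Φlin (θ' x) = Φlin (θ' y) := by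
      rw [← hΛθ]
      simp only [LinearMap.comp_apply, hid]
      exact hxy
    have h2 := hΦlininj h1
    rw [← hid x, ← hid y, h2]
  -- the height condition through the concrete linearization
  have hspan : ∀ x : N, E ^ h • x ∈ LinearMap.range Λ' := by
    intro x
    have hle : Submodule.span S (Set.range ⇑ΦN) ≤ LinearMap.range Λ' := by
      rw [Submodule.span_le]
      rintro _ ⟨y, rfl⟩
      exact ⟨ι' y, hΛι y⟩
    exact hle (hNht x)
  obtain ⟨w, hw⟩ := hspan n'
  have heq : E ^ h • ι' n = X ^ D • w := by
    apply hΛ'inj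
    rw [map_smul, map_smul, hΛι, hΦn, hw, smul_smul, smul_smul, mul_comm]
  have heq2 : E ^ h • (ι n) = X ^ D • (w : Fin r → S) := by
    have := congrArg (fun z : phiStarC φS ρ => (z : Fin r → S)) heq
    exact this
  set d := D - q * h with hd
  have hd1 : 1 ≤ d := by omega
  have hDeq : D = q * h + d := by omega
  set z : Fin r → S := c' ^ h • (w : Fin r → S) with hz
  have hcomp : ∀ i, X ^ (q*h) * (ι n i) = X ^ (q*h) * (X ^ d * z i) := by
    intro i
    have e1 : E ^ h * ι n i = X ^ D * (w : Fin r → S) i := by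
      have := congrFun heq2 i
      simpa [Pi.smul_apply, smul_eq_mul] using this
    have hzi : z i = c' ^ h * (w : Fin r → S) i := by
      rw [hz]; simp [Pi.smul_apply, smul_eq_mul]
    calc X ^ (q*h) * ι n i = (E * c') ^ h * ι n i := by rw [hEc, ← pow_mul]
      _ = c' ^ h * (E ^ h * ι n i) := by ring
      _ = c' ^ h * (X ^ D * (w : Fin r → S) i) := by rw [e1]
      _ = X ^ (q*h) * (X ^ d * z i) := by rw [hzi, hDeq, pow_add]; ring
  have hXd : ∀ i, X ∣ ρ n i := by
    intro i
    apply hφdvd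
    have hii : ι n i = X ^ d * z i := by
      have h6 : X ^ (q*h) * (ι n i - X ^ d * z i) = 0 := by
        rw [mul_sub, hcomp i, sub_self]
      exact sub_eq_zero.mp (hXregpow (q*h) _ h6)
    rw [← iotaC_apply φS ρ n i]
    show X ∣ ι n i
    rw [hii]
    exact dvd_mul_of_dvd_left (dvd_pow_self X (by omega : d ≠ 0)) _
  choose v hv using hXd
  refine ⟨π v, ?_⟩
  have hρn : ρ n = X • v := by
    funext i
    rw [Pi.smul_apply, smul_eq_mul]
    exact hv i
  rw [← hπρ n, hρn, map_smul]
end Key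

section SSfacts
variable (A : Type) [CommRing A] [Algebra ℤ_[p] A]

lemma frobenius_zpToWitt (z : ℤ_[p]) :
    WittVector.frobenius (zpToWitt p k' z) = zpToWitt p k' z := by
  apply WittVector.ext
  intro n
  show (WittVector.frobenius ((WittVector.map (ZMod.castHom (dvd_refl p) k'))
      ((WittVector.equiv p).symm z))).coeff n = _
  rw [WittVector.coeff_frobenius_charP, WittVector.map_coeff]
  rw [← map_pow, ZMod.pow_card]
  rfl

lemma sigma_injective (σ : WW p k' A →+* WW p k' A) (φS : SS p k' A →+* SS p k' A)
    (hφ : IsFrobeniusLift p k' A σ φS) : Function.Injective ⇑σ := by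
  classical
  set W := WittVector p k'
  set F : W ≃+* W := WittVector.frobeniusEquiv p k' with hF
  have hσten : ∀ (w : W) (b : A),
      σ (w ⊗ₜ[ℤ_[p]] b) = (WittVector.frobenius w) ⊗ₜ[ℤ_[p]] b := by
    intro w b
    have h1 : (w ⊗ₜ[ℤ_[p]] b) = (w ⊗ₜ[ℤ_[p]] (1:A)) * ((1:W) ⊗ₜ[ℤ_[p]] b) := by
      rw [Algebra.TensorProduct.tmul_mul_tmul, mul_one, one_mul]
    rw [h1, map_mul, hφ.1, hφ.2.1, Algebra.TensorProduct.tmul_mul_tmul, mul_one, one_mul]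
  have hFalg : ∀ z : ℤ_[p], F.symm (algebraMap ℤ_[p] W z) = algebraMap ℤ_[p] W z := by
    intro z
    apply F.injective
    rw [F.apply_symm_apply]
    have hfz : F (algebraMap ℤ_[p] W z) = algebraMap ℤ_[p] W z := by
      rw [hF, WittVector.frobeniusEquiv_apply]
      exact frobenius_zpToWitt p k' z
    rw [hfz]
  set Fb : W →ₐ[ℤ_[p]] W := { toRingHom := (F.symm : W →+* W), commutes' := hFalg } with hFb
  set τ : WW p k' A →ₐ[ℤ_[p]] WW p k' A :=
    Algebra.TensorProduct.map Fb (AlgHom.id ℤ_[p] A) with hτ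
  have hτσ : ∀ x : WW p k' A, τ (σ x) = x := by
    intro x
    induction x using TensorProduct.induction_on with
    | zero => rw [map_zero, map_zero]
    | tmul w b =>
      rw [hσten, hτ, Algebra.TensorProduct.map_tmul]
      have h2 : Fb (WittVector.frobenius w) = w := by
        rw [hFb]
        show F.symm (WittVector.frobenius w) = w
        have h3 : WittVector.frobenius w = F w := by
          rw [hF, WittVector.frobeniusEquiv_apply]
        rw [h3, F.symm_apply_apply]
      rw [h2]
      rfl
    | add x y hx hy => rw [map_add, map_add, hx, hy]
  exact fun x y hxy => by rw [← hτσ x, ← hτσ y, hxy]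

end SSfacts

lemma X_regular {R : Type} [CommRing R] (s : PowerSeries R)
    (hs : PowerSeries.X * s = 0) : s = 0 := by
  ext n
  rw [← PowerSeries.coeff_succ_X_mul, hs, map_zero, map_zero]

section SSfacts2
variable (A : Type) [CommRing A] [Algebra ℤ_[p] A]

lemma phiS_X_dvd (σ : WW p k' A →+* WW p k' A) (φS : SS p k' A →+* SS p k' A)
    (hφ : IsFrobeniusLift p k' A σ φS) (σinj : Function.Injective ⇑σ)
    (g : SS p k' A) (hXg : (PowerSeries.X : SS p k' A) ∣ φS g) :
    (PowerSeries.X : SS p k' A) ∣ g := by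
  rw [PowerSeries.X_dvd_iff] at hXg ⊢
  have h0 := hφ.2.2 g 0
  rw [if_pos (dvd_zero p), Nat.zero_div] at h0
  have h1 : σ ((PowerSeries.coeff (R := WW p k' A) 0) g) = σ 0 := by
    rw [map_zero, ← h0, PowerSeries.coeff_zero_eq_constantCoeff, hXg]
  have := σinj h1
  rw [← PowerSeries.coeff_zero_eq_constantCoeff]
  exact this

lemma eisenstein_dvd_X_pow (a : ℕ) (ha : (p : A) ^ a = 0)
    (e' : ℕ) (E : Polynomial (WittVector p k')) (hE : IsEisenstein p k' e' E) :
    ∃ c' : SS p k' A, polyToSS p k' A E * c' = (PowerSeries.X : SS p k' A) ^ (e' * a) := by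
  classical
  obtain ⟨hmonic, hdeg, he1, hlow, -⟩ := hE
  have hsel : ∀ i : ℕ, ∃ w : WittVector p k',
      (i < e' → E.coeff i = (p : WittVector p k') * w) := by
    intro i
    by_cases hi : i < e'
    · obtain ⟨w, hw⟩ := Ideal.mem_span_singleton'.mp (hlow i hi)
      exact ⟨w, fun _ => by rw [← hw, mul_comm]⟩
    · exact ⟨0, fun h => absurd h hi⟩
  choose wf hwf using hsel
  set H : SS p k' A :=
    PowerSeries.mk fun n => if n < e' then -(wf n ⊗ₜ[ℤ_[p]] (1:A)) else 0 with hH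
  have hkey : (PowerSeries.X : SS p k' A) ^ e' = polyToSS p k' A E + (p : ℕ) • H := by
    ext n
    rw [map_add, PowerSeries.coeff_X_pow]
    have hch : (PowerSeries.coeff (R := WW p k' A) n) (polyToSS p k' A E)
        = E.coeff n ⊗ₜ[ℤ_[p]] (1:A) := by
      rw [polyToSS, PowerSeries.coeff_mk]
    have hcH : (PowerSeries.coeff (R := WW p k' A) n) ((p:ℕ) • H)
        = (p:ℕ) • (if n < e' then -(wf n ⊗ₜ[ℤ_[p]] (1:A)) else 0) := by
      rw [map_nsmul, hH, PowerSeries.coeff_mk]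
    rw [hch, hcH]
    rcases lt_trichotomy n e' with hn | hn | hn
    · rw [if_neg (by omega), if_pos hn, hwf n hn]
      rw [smul_neg]
      have h4 : (p:ℕ) • ((wf n) ⊗ₜ[ℤ_[p]] (1:A)) =
          ((p : WittVector p k') * wf n) ⊗ₜ[ℤ_[p]] (1:A) := by
        rw [TensorProduct.smul_tmul', nsmul_eq_mul]
      rw [h4]
      exact (add_neg_cancel _).symm
    · subst hn
      rw [if_pos rfl, if_neg (by omega), smul_zero, add_zero, ← hdeg,
        hmonic.coeff_natDegree, Algebra.TensorProduct.one_def]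
    · rw [if_neg (by omega), if_neg (by omega), smul_zero, add_zero,
        Polynomial.coeff_eq_zero_of_natDegree_lt (by omega), TensorProduct.zero_tmul]
  have hpa : ((p : ℕ) : SS p k' A) ^ a = 0 := by
    have h1 : ((p:ℕ) : WW p k' A) = (1 : WittVector p k') ⊗ₜ[ℤ_[p]] ((p:ℕ) : A) := by
      rw [← map_natCast (Algebra.TensorProduct.includeRight :
        A →ₐ[ℤ_[p]] WittVector p k' ⊗[ℤ_[p]] A) p]
      rfl
    have h2 : ((p:ℕ) : SS p k' A) = PowerSeries.C (R := WW p k' A) ((p:ℕ) : WW p k' A) := by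
      rw [map_natCast]
    rw [h2, ← map_pow, h1]
    have h3 : ((1 : WittVector p k') ⊗ₜ[ℤ_[p]] ((p:ℕ) : A)) ^ a
        = (1 : WittVector p k') ⊗ₜ[ℤ_[p]] (((p:ℕ) : A) ^ a) := by
      rw [Algebra.TensorProduct.tmul_pow, one_pow]
    rw [h3, ha, TensorProduct.tmul_zero, map_zero]
  set I := Ideal.span {polyToSS p k' A E} with hI
  have hmem : (PowerSeries.X : SS p k' A) ^ (e' * a) ∈ I := by
    rw [← Ideal.Quotient.eq_zero_iff_mem, pow_mul, map_pow, hkey, map_add]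
    have hE0 : Ideal.Quotient.mk I (polyToSS p k' A E) = 0 :=
      Ideal.Quotient.eq_zero_iff_mem.mpr (Ideal.subset_span rfl)
    rw [hE0, zero_add, map_nsmul, nsmul_eq_mul, mul_pow, ← map_natCast (Ideal.Quotient.mk I),
      ← map_pow, hpa, map_zero, zero_mul]
  obtain ⟨c', hc'⟩ := Ideal.mem_span_singleton'.mp hmem
  exact ⟨c', by rw [← hc', mul_comm]⟩

end SSfacts2


variable (A : Type) [CommRing A] [Algebra ℤ_[p] A]

/-- Let `A` be Noetherian with `p^a = 0` (`a ≥ 1`), `E(u)` Eisenstein of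
degree `e'`, and let `M`, `N` be Breuil–Kisin modules with `A`-coefficients, with `N` of
height at most `h`.  If `f : M → N[1/u]/N` is an `𝔖_A`-linear map commuting with the
(induced) Frobenii, then `f(M)` is killed by `u^i` for every `i ≥ ⌊e'·a·h/(p−1)⌋`.
(Here `N[1/u]` is the localization of `N` at the powers of `u`, and `N[1/u]/N` is its
quotient by the image of `N`; the induced Frobenius `Φ̄` on the quotient is characterised by
`Φ̄(n/u^k mod N) = Φ_N(n)/u^{pk} mod N`.) -/
theorem statement_8
    (σ : WW p k' A →+* WW p k' A) (φS : SS p k' A →+* SS p k' A)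
    (hφ : IsFrobeniusLift p k' A σ φS)
    [IsNoetherianRing A] (a : ℕ) (ha1 : 1 ≤ a) (ha : (p : A) ^ a = 0)
    (e' : ℕ) (E : Polynomial (WittVector p k')) (hE : IsEisenstein p k' e' E)
    (h : ℕ)
    (M : Type) [AddCommGroup M] [Module (SS p k' A) M]
    [Module.Finite (SS p k' A) M] [Module.Projective (SS p k' A) M]
    (Φ : M →ₛₗ[φS] M)
    (hMiso : LinearizationBijectiveAfterInverting φS (polyToSS p k' A E) Φ)
    (N : Type) [AddCommGroup N] [Module (SS p k' A) N]
    [Module.Finite (SS p k' A) N] [Module.Projective (SS p k' A) N]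
    (ΦN : N →ₛₗ[φS] N)
    (hNiso : LinearizationBijectiveAfterInverting φS (polyToSS p k' A E) ΦN)
    (hNht : ∀ x : N, polyToSS p k' A E ^ h • x ∈
      Submodule.span (SS p k' A) (Set.range ⇑ΦN)) :
    let pows := Submonoid.powers (PowerSeries.X : SS p k' A)
    let K : Submodule (SS p k' A) (LocalizedModule pows N) :=
      LinearMap.range (LocalizedModule.mkLinearMap pows N)
    ∀ (ΦQ : (LocalizedModule pows N ⧸ K) →ₛₗ[φS] (LocalizedModule pows N ⧸ K)),
      (∀ (x : N) (k : ℕ),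
        ΦQ (Submodule.Quotient.mk (LocalizedModule.mk x
            ⟨(PowerSeries.X : SS p k' A) ^ k, pows.pow_mem (Submonoid.mem_powers _) k⟩)) =
          Submodule.Quotient.mk (LocalizedModule.mk (ΦN x)
            ⟨(PowerSeries.X : SS p k' A) ^ (p * k), pows.pow_mem (Submonoid.mem_powers _) (p * k)⟩)) →
      ∀ (f : M →ₗ[SS p k' A] (LocalizedModule pows N ⧸ K)),
        (∀ m : M, f (Φ m) = ΦQ (f m)) →
        ∀ i : ℕ, e' * a * h / (p - 1) ≤ i →
          ∀ m : M, (PowerSeries.X : SS p k' A) ^ i • f m = 0 := by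
  
  intro pows K ΦQ hΦQ f hf i hi m
  classical
  set X : SS p k' A := PowerSeries.X with hX
  have σinj := sigma_injective p k' A σ φS hφ
  have hφdvd : ∀ s : SS p k' A, X ∣ φS s → X ∣ s :=
    fun s => phiS_X_dvd p k' A σ φS hφ σinj s
  have hXreg : ∀ s : SS p k' A, X * s = 0 → s = 0 := fun s => X_regular s
  have hXregpow : ∀ (k : ℕ) (s : SS p k' A), X ^ k * s = 0 → s = 0 := by
    intro k
    induction k with
    | zero => intro s hs; simpa using hs
    | succ k ih =>
      intro s hs
      refine ih s (hXreg _ ?_)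
      rw [← mul_assoc, mul_comm X (X ^ k), ← pow_succ]
      exact hs
  obtain ⟨c', hc'⟩ := eisenstein_dvd_X_pow p k' A a ha e' E hE
  obtain ⟨r, πN, hπNsurj⟩ := Module.Finite.exists_fin' (SS p k' A) N
  obtain ⟨ρN, hρN⟩ := Module.projective_lifting_property πN LinearMap.id hπNsurj
  have hπρ : ∀ y : N, πN (ρN y) = y := by
    intro y
    have := LinearMap.congr_fun hρN y
    simpa using this
  have hNtf : ∀ (k : ℕ) (y : N), X ^ k • y = 0 → y = 0 := by
    intro k y hy
    have hρ : ρN y = 0 := by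
      funext i0
      have h5 : X ^ k * ρN y i0 = 0 := by
        have := congrFun (congrArg (fun z => ρN z) hy) i0
        simpa [map_smul, Pi.smul_apply, smul_eq_mul] using this
      exact hXregpow k _ h5
    rw [← hπρ y, hρ, map_zero]
  -- every element of the quotient is killed by a power of X
  have hkill1 : ∀ q0 : LocalizedModule pows N ⧸ K, ∃ k : ℕ, X ^ k • q0 = 0 := by
    intro q0
    obtain ⟨z, rfl⟩ := Submodule.Quotient.mk_surjective K q0
    induction z using LocalizedModule.induction_on with
    | h y s =>
      obtain ⟨k, hk⟩ := s.2
      refine ⟨k, ?_⟩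
      rw [← Submodule.Quotient.mk_smul, LocalizedModule.smul'_mk]
      refine (Submodule.Quotient.mk_eq_zero K).mpr ⟨y, ?_⟩
      show LocalizedModule.mk y 1 = LocalizedModule.mk (X ^ k • y) s
      rw [LocalizedModule.mk_eq]
      refine ⟨1, ?_⟩
      simp only [one_smul, Submonoid.smul_def, OneMemClass.coe_one]
      rw [← hk]
  -- a uniform killer
  have hJne : ∃ s0 : ℕ, ∀ m : M, X ^ s0 • f m = 0 := by
    obtain ⟨g, FM, hFM⟩ := Module.Finite.exists_fin' (SS p k' A) M
    choose kf hkf using fun i0 : Fin g =>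
      hkill1 (f (FM (Pi.single i0 (1 : SS p k' A) : Fin g → SS p k' A)))
    refine ⟨Finset.univ.sup kf, fun m => ?_⟩
    obtain ⟨v, rfl⟩ := hFM m
    have hv : v = ∑ i0, v i0 • (Pi.single i0 (1 : SS p k' A) : Fin g → SS p k' A) :=
      (pi_decomp v).symm
    rw [hv, map_sum, map_sum, Finset.smul_sum]
    refine Finset.sum_eq_zero fun i0 _ => ?_
    rw [map_smul, map_smul, smul_comm]
    have hle : kf i0 ≤ Finset.univ.sup kf := Finset.le_sup (Finset.mem_univ i0)
    have h6 : X ^ (Finset.univ.sup kf) •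
        f (FM (Pi.single i0 (1 : SS p k' A) : Fin g → SS p k' A)) = 0 := by
      rw [← Nat.sub_add_cancel hle, pow_add, mul_smul, hkf i0, smul_zero]
    rw [h6, smul_zero]
  have hJup : ∀ s t : ℕ, s ≤ t → (∀ m : M, X ^ s • f m = 0) → ∀ m : M, X ^ t • f m = 0 := by
    intro s t hst hJ m
    rw [← Nat.sub_add_cancel hst, pow_add, mul_smul, hJ m, smul_zero]
  suffices hjB : ∃ s : ℕ, (∀ m : M, X ^ s • f m = 0) ∧ s ≤ e' * a * h / (p - 1) by
    obtain ⟨s, hJs, hsB⟩ := hjB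
    exact hJup s i (le_trans hsB hi) hJs m
  set j := Nat.find hJne with hjdef
  have hfind : ∀ m : M, X ^ j • f m = 0 := Nat.find_spec hJne
  refine ⟨j, hfind, ?_⟩
  by_contra hlt
  push_neg at hlt
  have hp2 : 2 ≤ p := (Fact.out : p.Prime).two_le
  have hbig : e' * a * h < (p - 1) * j := by
    have h7 := (Nat.div_lt_iff_lt_mul (by omega : 0 < p - 1)).mp hlt
    calc e' * a * h < j * (p - 1) := h7
      _ = (p - 1) * j := Nat.mul_comm _ _
  have hj0 : 0 < j := by
    rcases Nat.eq_zero_or_pos j with h0 | h0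
    · rw [h0, Nat.mul_zero] at hbig; omega
    · exact h0
  have hpj : j + (p - 1) * j = p * j := by
    have h8 : (p - 1) + 1 = p := by omega
    calc j + (p - 1) * j = ((p - 1) + 1) * j := by ring
      _ = p * j := by rw [h8]
  -- the descent step
  have hstep : ∀ m : M, X ^ (j - 1) • f m = 0 := by
    intro m
    -- representation of `f m` with denominator `X ^ j`
    have hrep : ∃ n : N, f m = Submodule.Quotient.mk (LocalizedModule.mk n
        ⟨X ^ j, pows.pow_mem (Submonoid.mem_powers _) j⟩) := by
      obtain ⟨z, hz⟩ := Submodule.Quotient.mk_surjective K (f m)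
      obtain ⟨y, s, rfl⟩ : ∃ y s, z = LocalizedModule.mk y s := by
        induction z using LocalizedModule.induction_on with
        | h y s => exact ⟨y, s, rfl⟩
      have h1 : X ^ j • f m = 0 := hfind m
      rw [← hz, ← Submodule.Quotient.mk_smul, LocalizedModule.smul'_mk] at h1
      obtain ⟨n₀, hn₀⟩ := (Submodule.Quotient.mk_eq_zero K).mp h1
      have hn₀' : LocalizedModule.mk n₀ (1 : pows) = LocalizedModule.mk (X ^ j • y) s := hn₀
      obtain ⟨u, hu⟩ := LocalizedModule.mk_eq.mp hn₀'
      refine ⟨n₀, ?_⟩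
      rw [← hz]
      apply congrArg (Submodule.Quotient.mk)
      rw [LocalizedModule.mk_eq]
      refine ⟨u, ?_⟩
      simp only [Submonoid.smul_def, OneMemClass.coe_one, one_smul] at hu ⊢
      exact hu.symm
    obtain ⟨n, hfm⟩ := hrep
    -- Frobenius compatibility
    have hfΦ : f (Φ m) = Submodule.Quotient.mk (LocalizedModule.mk (ΦN n)
        ⟨X ^ (p * j), pows.pow_mem (Submonoid.mem_powers _) (p * j)⟩) := by
      rw [hf m, hfm]
      exact hΦQ n j
    have h1 : X ^ j • f (Φ m) = 0 := hfind (Φ m)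
    rw [hfΦ, ← Submodule.Quotient.mk_smul, LocalizedModule.smul'_mk] at h1
    obtain ⟨n₀, hn₀⟩ := (Submodule.Quotient.mk_eq_zero K).mp h1
    have hn₀' : LocalizedModule.mk n₀ (1 : pows) = LocalizedModule.mk (X ^ j • ΦN n)
        ⟨X ^ (p * j), pows.pow_mem (Submonoid.mem_powers _) (p * j)⟩ := hn₀
    obtain ⟨u, hu⟩ := LocalizedModule.mk_eq.mp hn₀'
    obtain ⟨t, ht⟩ := u.2
    simp only [Submonoid.smul_def, OneMemClass.coe_one, one_smul] at hu
    rw [← ht] at hu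
    have hu2 : X ^ (t + p * j) • n₀ = X ^ (t + j) • ΦN n := by
      rw [pow_add, pow_add, mul_smul, mul_smul]
      exact hu
    have hΦNn : ΦN n = X ^ ((p - 1) * j) • n₀ := by
      have hexp : t + j + (p - 1) * j = t + p * j := by
        calc t + j + (p - 1) * j = t + (j + (p - 1) * j) := by ring
          _ = t + p * j := by rw [hpj]
      have h9 : X ^ (t + j) • (ΦN n - X ^ ((p - 1) * j) • n₀) = 0 := by
        rw [smul_sub, smul_smul, ← pow_add, hexp, hu2, sub_self]
      have h10 := hNtf (t + j) _ h9
      exact sub_eq_zero.mp h10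
    have hD : (e' * a) * h < (p - 1) * j := by
      calc (e' * a) * h = e' * a * h := by ring
        _ < (p - 1) * j := hbig
    obtain ⟨n₂, hn₂⟩ := key_div ΦN X (polyToSS p k' A E) c' (e' * a) h hc' hXreg hφdvd
      hNht hNiso ρN πN hπρ n n₀ ((p - 1) * j) hD hΦNn
    rw [hfm, ← Submodule.Quotient.mk_smul, LocalizedModule.smul'_mk]
    refine (Submodule.Quotient.mk_eq_zero K).mpr ⟨n₂, ?_⟩
    show LocalizedModule.mk n₂ 1 = LocalizedModule.mk (X ^ (j - 1) • n)
      ⟨X ^ j, pows.pow_mem (Submonoid.mem_powers _) j⟩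
    rw [LocalizedModule.mk_eq]
    refine ⟨1, ?_⟩
    simp only [Submonoid.smul_def, OneMemClass.coe_one, one_smul]
    rw [hn₂, smul_smul, ← pow_succ, Nat.sub_add_cancel hj0]
  exact absurd hstep (Nat.find_min hJne (by omega))
end
end
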